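/- arXiv:2509.06128 — 5 statements merged into one kernel-verified Lean document; each statement's English description precedes it below -/
import Mathlib

section
/- For every integer k ≥ 1 and every τ in the complex upper half-plane ℍ, the lattice theta function satisfies Θ_{Γ_{8k}}(τ) = (1/2)·(θ₂(τ)^{8k} + θ₃(τ)^{8k} + θ₄(τ)^{8k}). -/
open scoped Real

/-- The Jacobi theta function `θ₂`. -/
noncomputable def theta2 (τ : ℂ) : ℂ :=
  ∑' n : ℤ, Complex.exp (Real.pi * Complex.I * τ * ((n : ℂ) + 1 / 2) ^ 2)

/-- The Jacobi theta function `θ₃`. -/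
noncomputable def theta3 (τ : ℂ) : ℂ :=
  ∑' n : ℤ, Complex.exp (Real.pi * Complex.I * τ * (n : ℂ) ^ 2)

/-- The Jacobi theta function `θ₄`. -/
noncomputable def theta4 (τ : ℂ) : ℂ :=
  ∑' n : ℤ, (-1 : ℂ) ^ n * Complex.exp (Real.pi * Complex.I * τ * (n : ℂ) ^ 2)

/-- The lattice `Γ_{8k} ⊂ ℝ^{8k}`. -/
def GammaLattice (k : ℕ) : Set (Fin (8 * k) → ℝ) :=
  {x | ((∀ i, ∃ m : ℤ, x i = m) ∨ (∀ i, ∃ m : ℤ, x i = m + 1 / 2)) ∧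
    ∃ m : ℤ, (∑ i, x i) = 2 * m}

/-- The theta function of the lattice `Γ_{8k}`. -/
noncomputable def ThetaGamma (k : ℕ) (τ : ℂ) : ℂ :=
  ∑' x : GammaLattice k, Complex.exp (Real.pi * Complex.I * τ * ((∑ i, (x.1 i) ^ 2 : ℝ) : ℂ))

/- ### Auxiliary development -/

noncomputable def Fc (τ : ℂ) (t : ℝ) : ℂ := Complex.exp (Real.pi * Complex.I * τ * (t : ℂ))

lemma norm_Fc (τ : ℂ) (t : ℝ) : ‖Fc τ t‖ = Real.exp (-Real.pi * (τ.im * t)) := by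
  rw [Fc, Complex.norm_exp]
  congr 1
  rw [show (Real.pi * Complex.I * τ * (t : ℂ)) = ((Real.pi * t : ℝ) : ℂ) * (τ * Complex.I) by
    push_cast; ring, Complex.re_ofReal_mul, Complex.mul_I_re]
  ring

lemma Fc_sum (τ : ℂ) {N : ℕ} (x : Fin N → ℝ) :
    Fc τ (∑ i, x i) = ∏ i, Fc τ (x i) := by
  simp only [Fc, ← Complex.exp_sum]
  congr 1
  push_cast [Finset.mul_sum]
  rfl

lemma summable_norm_Fc {τ : ℂ} (hτ : 0 < τ.im) (c : ℝ) :
    Summable (fun n : ℤ => ‖Fc τ (((n : ℝ) + c) ^ 2)‖) := by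
  have hb := summable_pow_mul_jacobiTheta₂_term_bound (τ.im * |c|) hτ 0
  simp only [pow_zero, one_mul] at hb
  refine hb.of_nonneg_of_le (fun n => norm_nonneg _) (fun n => ?_)
  rw [norm_Fc]
  apply Real.exp_le_exp.2
  have h3 : ((|n| : ℤ) : ℝ) = |(n : ℝ)| := by push_cast; rfl
  rw [h3]
  have key : (n:ℝ)^2 - 2 * |c| * |(n:ℝ)| ≤ ((n:ℝ)+c)^2 := by
    nlinarith [neg_abs_le (c*(n:ℝ)), abs_mul c (n:ℝ), sq_nonneg c]
  have key2 := mul_le_mul_of_nonneg_left key hτ.le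
  nlinarith [Real.pi_pos, key2]

lemma summable_norm_pi {g : ℤ → ℂ} (hg : Summable fun n => ‖g n‖) (N : ℕ) :
    Summable (fun x : Fin N → ℤ => ‖∏ i, g (x i)‖) := by
  induction N with
  | zero => exact .of_finite
  | succ n ih =>
    have h2 := hg.mul_of_nonneg ih (fun _ => norm_nonneg _) (fun _ => norm_nonneg _)
    rw [← (Fin.consEquiv (fun _ : Fin (n + 1) => ℤ)).summable_iff]
    refine h2.congr fun z => ?_
    simp [Function.comp, Fin.consEquiv, Fin.prod_univ_succ, norm_mul]

lemma tsum_pi_pow {g : ℤ → ℂ} (hg : Summable fun n => ‖g n‖) (N : ℕ) :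
    (∑' n, g n) ^ N = ∑' x : Fin N → ℤ, ∏ i, g (x i) := by
  induction N with
  | zero =>
    rw [pow_zero, tsum_eq_single (fun _ => 0) (fun b hb => absurd (Subsingleton.elim b _) hb)]
    simp
  | succ n ih =>
    rw [pow_succ', ih, tsum_mul_tsum_of_summable_norm hg (summable_norm_pi hg n),
      ← (Fin.consEquiv (fun _ : Fin (n + 1) => ℤ)).tsum_eq]
    refine tsum_congr fun z => ?_
    simp [Fin.consEquiv, Fin.prod_univ_succ]

lemma neg_one_zpow_sum {ι : Type*} (s : Finset ι) (f : ι → ℤ) :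
    (-1 : ℂ) ^ (∑ i ∈ s, f i) = ∏ i ∈ s, (-1 : ℂ) ^ (f i) := by
  classical
  induction s using Finset.induction with
  | empty => simp
  | @insert _ _ h ih =>
    rw [Finset.sum_insert h, Finset.prod_insert h, zpow_add₀ (by norm_num : (-1:ℂ) ≠ 0), ih]

lemma tsum_one_add_sign {N : ℕ} (G : (Fin N → ℤ) → ℂ) :
    ∑' x : Fin N → ℤ, (1 + (-1 : ℂ) ^ (∑ i, x i)) * G x =
      2 * ∑' x : {x : Fin N → ℤ // Even (∑ i, x i)}, G x.1 := by
  have hsupp : Function.support (fun x : Fin N → ℤ => (1 + (-1 : ℂ) ^ (∑ i, x i)) * G x) ⊆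
      {x | Even (∑ i, x i)} := by
    intro x hx
    by_contra h
    rw [Set.mem_setOf_eq, Int.not_even_iff_odd] at h
    simp [h.neg_one_zpow] at hx
  rw [← tsum_subtype_eq_of_support_subset hsupp, ← tsum_mul_left]
  refine tsum_congr fun x => ?_
  rw [x.2.neg_one_zpow]
  ring

lemma tsum_sign_Qhalf (τ : ℂ) {N : ℕ} (hN : 0 < N) :
    ∑' x : Fin N → ℤ, (-1 : ℂ) ^ (∑ i, x i) * Fc τ (∑ i, ((x i : ℝ) + 1 / 2) ^ 2) = 0 := by
  set i₀ : Fin N := ⟨0, hN⟩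
  set T : (Fin N → ℤ) → (Fin N → ℤ) := fun x => Function.update x i₀ (-(x i₀) - 1) with hT
  have hinv : Function.Involutive T := by
    intro x; funext i
    by_cases hi : i = i₀
    · subst hi; simp [T, Function.update_self]
    · simp [T, Function.update_of_ne hi]
  set f : (Fin N → ℤ) → ℂ := fun x => (-1 : ℂ) ^ (∑ i, x i) * Fc τ (∑ i, ((x i : ℝ) + 1 / 2) ^ 2)
    with hf
  have key1 : ∀ x : Fin N → ℤ, ∑ i, ((T x i : ℝ) + 1 / 2) ^ 2 = ∑ i, ((x i : ℝ) + 1 / 2) ^ 2 := by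
    intro x
    refine Finset.sum_congr rfl fun i _ => ?_
    by_cases hi : i = i₀
    · subst hi; simp only [T, Function.update_self]; push_cast; ring
    · simp [T, Function.update_of_ne hi]
  have key2 : ∀ x : Fin N → ℤ, (∑ i, T x i) = (∑ i, x i) - (2 * x i₀ + 1) := by
    intro x
    rw [show (∑ i, T x i) = ∑ i, Function.update x i₀ (-(x i₀) - 1) i from rfl,
      Finset.sum_update_of_mem (Finset.mem_univ i₀),
      Finset.sum_sdiff_eq_sub (Finset.singleton_subset_iff.2 (Finset.mem_univ i₀)),
      Finset.sum_singleton]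
    ring
  have key3 : ∀ x : Fin N → ℤ, f (T x) = -f x := by
    intro x
    rw [hf]
    simp only
    rw [key1, key2, zpow_sub₀ (by norm_num : (-1 : ℂ) ≠ 0),
      zpow_add₀ (by norm_num : (-1 : ℂ) ≠ 0), zpow_one,
      (even_two_mul (x i₀)).neg_one_zpow]
    ring
  have he : ∑' x, f x = -∑' x, f x := by
    calc ∑' x, f x = ∑' x, f ((hinv.toPerm T) x) := ((hinv.toPerm T).tsum_eq f).symm
    _ = ∑' x, -f x := tsum_congr fun x => key3 x
    _ = -∑' x, f x := tsum_neg
  have h2 : (∑' x, f x) + ∑' x, f x = 0 := by nth_rewrite 1 [he]; exact neg_add_cancel _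
  exact add_self_eq_zero.mp h2

theorem stmt0 (k : ℕ) (hk : 1 ≤ k) (τ : ℂ) (hτ : 0 < τ.im) :
    ThetaGamma k τ =
      (1 / 2) * (theta2 τ ^ (8 * k) + theta3 τ ^ (8 * k) + theta4 τ ^ (8 * k)) := by
  classical
  have hN0 : 0 < 8 * k := by omega
  set i0 : Fin (8 * k) := ⟨0, hN0⟩ with hi0
  -- summable norms of the one-dimensional terms
  have hg3 : Summable fun n : ℤ => ‖Fc τ (((n : ℝ)) ^ 2)‖ := by
    simpa using summable_norm_Fc hτ 0
  have hg2 : Summable fun n : ℤ => ‖Fc τ (((n : ℝ) + 1 / 2) ^ 2)‖ := summable_norm_Fc hτ (1 / 2)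
  have hg4 : Summable fun n : ℤ => ‖(-1 : ℂ) ^ n * Fc τ (((n : ℝ)) ^ 2)‖ := by
    refine hg3.congr fun n => ?_
    rw [norm_mul, norm_zpow]
    simp
  -- the power identities
  have h3 : theta3 τ ^ (8 * k) = ∑' x : Fin (8 * k) → ℤ, Fc τ (∑ i, ((x i : ℝ)) ^ 2) := by
    have ht : theta3 τ = ∑' n : ℤ, Fc τ (((n : ℝ)) ^ 2) := by
      refine tsum_congr fun n => ?_
      rw [Fc]
      congr 1
      push_cast
      ring
    rw [ht, tsum_pi_pow hg3]
    exact tsum_congr fun x => (Fc_sum τ fun i => ((x i : ℝ)) ^ 2).symm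
  have h2 : theta2 τ ^ (8 * k) = ∑' x : Fin (8 * k) → ℤ, Fc τ (∑ i, ((x i : ℝ) + 1 / 2) ^ 2) := by
    have ht : theta2 τ = ∑' n : ℤ, Fc τ (((n : ℝ) + 1 / 2) ^ 2) := by
      refine tsum_congr fun n => ?_
      rw [Fc]
      congr 1
      push_cast
      ring
    rw [ht, tsum_pi_pow hg2]
    exact tsum_congr fun x => (Fc_sum τ fun i => ((x i : ℝ) + 1 / 2) ^ 2).symm
  have h4 : theta4 τ ^ (8 * k) =
      ∑' x : Fin (8 * k) → ℤ, (-1 : ℂ) ^ (∑ i, x i) * Fc τ (∑ i, ((x i : ℝ)) ^ 2) := by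
    have ht : theta4 τ = ∑' n : ℤ, (-1 : ℂ) ^ n * Fc τ (((n : ℝ)) ^ 2) := by
      refine tsum_congr fun n => ?_
      rw [Fc]
      congr 2
      push_cast
      ring
    rw [ht, tsum_pi_pow hg4]
    refine tsum_congr fun x => ?_
    rw [Finset.prod_mul_distrib, ← neg_one_zpow_sum, ← Fc_sum]
  -- summability of the multi-dimensional terms
  have S3 : Summable fun x : Fin (8 * k) → ℤ => Fc τ (∑ i, ((x i : ℝ)) ^ 2) := by
    refine Summable.of_norm (((summable_norm_pi hg3 (8 * k))).congr fun x => ?_)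
    rw [← Fc_sum]
  have S2 : Summable fun x : Fin (8 * k) → ℤ => Fc τ (∑ i, ((x i : ℝ) + 1 / 2) ^ 2) := by
    refine Summable.of_norm (((summable_norm_pi hg2 (8 * k))).congr fun x => ?_)
    rw [← Fc_sum]
  have S4 : Summable fun x : Fin (8 * k) → ℤ =>
      (-1 : ℂ) ^ (∑ i, x i) * Fc τ (∑ i, ((x i : ℝ)) ^ 2) := by
    refine Summable.of_norm (((summable_norm_pi hg4 (8 * k))).congr fun x => ?_)
    rw [Finset.prod_mul_distrib, ← neg_one_zpow_sum, ← Fc_sum]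
  have S2e : Summable fun x : Fin (8 * k) → ℤ =>
      (-1 : ℂ) ^ (∑ i, x i) * Fc τ (∑ i, ((x i : ℝ) + 1 / 2) ^ 2) := by
    refine Summable.of_norm (((summable_norm_pi hg2 (8 * k))).congr fun x => ?_)
    rw [← Fc_sum, norm_mul, norm_zpow]
    simp
  -- reduction to sums over even-coordinate-sum vectors
  have h34 : theta3 τ ^ (8 * k) + theta4 τ ^ (8 * k) =
      2 * ∑' x : {x : Fin (8 * k) → ℤ // Even (∑ i, x i)}, Fc τ (∑ i, ((x.1 i : ℝ)) ^ 2) := by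
    rw [h3, h4, ← Summable.tsum_add S3 S4]
    rw [show (∑' x : Fin (8 * k) → ℤ,
        (Fc τ (∑ i, ((x i : ℝ)) ^ 2) + (-1 : ℂ) ^ (∑ i, x i) * Fc τ (∑ i, ((x i : ℝ)) ^ 2))) =
        ∑' x : Fin (8 * k) → ℤ, (1 + (-1 : ℂ) ^ (∑ i, x i)) * Fc τ (∑ i, ((x i : ℝ)) ^ 2) from
      tsum_congr fun x => by ring]
    exact tsum_one_add_sign (fun x => Fc τ (∑ i, ((x i : ℝ)) ^ 2))
  have h2' : theta2 τ ^ (8 * k) =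
      2 * ∑' x : {x : Fin (8 * k) → ℤ // Even (∑ i, x i)},
        Fc τ (∑ i, ((x.1 i : ℝ) + 1 / 2) ^ 2) := by
    rw [h2]
    have hz := tsum_sign_Qhalf τ (N := 8 * k) hN0
    calc ∑' x : Fin (8 * k) → ℤ, Fc τ (∑ i, ((x i : ℝ) + 1 / 2) ^ 2)
        = (∑' x : Fin (8 * k) → ℤ, Fc τ (∑ i, ((x i : ℝ) + 1 / 2) ^ 2)) +
          ∑' x : Fin (8 * k) → ℤ, (-1 : ℂ) ^ (∑ i, x i) *
            Fc τ (∑ i, ((x i : ℝ) + 1 / 2) ^ 2) := by rw [hz, add_zero]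
      _ = ∑' x : Fin (8 * k) → ℤ, (1 + (-1 : ℂ) ^ (∑ i, x i)) *
            Fc τ (∑ i, ((x i : ℝ) + 1 / 2) ^ 2) := by
          rw [← Summable.tsum_add S2 S2e]
          exact tsum_congr fun x => by ring
      _ = 2 * ∑' x : {x : Fin (8 * k) → ℤ // Even (∑ i, x i)},
            Fc τ (∑ i, ((x.1 i : ℝ) + 1 / 2) ^ 2) :=
          tsum_one_add_sign (fun x => Fc τ (∑ i, ((x i : ℝ) + 1 / 2) ^ 2))
  -- the lattice decomposition
  set A : Set (Fin (8 * k) → ℝ) :=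
    {y | (∀ i, ∃ m : ℤ, y i = m) ∧ ∃ m : ℤ, (∑ i, y i) = 2 * m} with hA_def
  set B : Set (Fin (8 * k) → ℝ) :=
    {y | (∀ i, ∃ m : ℤ, y i = m + 1 / 2) ∧ ∃ m : ℤ, (∑ i, y i) = 2 * m} with hB_def
  have hAB : GammaLattice k = A ∪ B := by
    ext y
    simp only [GammaLattice, Set.mem_setOf_eq, Set.mem_union, hA_def, hB_def]
    tauto
  have hdisj : Disjoint A B := by
    rw [Set.disjoint_left]
    rintro y ⟨hy1, -⟩ ⟨hy2, -⟩
    obtain ⟨m, hm⟩ := hy1 i0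
    obtain ⟨m', hm'⟩ := hy2 i0
    have hcast : ((2 * (m - m') : ℤ) : ℝ) = 1 := by push_cast; rw [hm] at hm'; linarith
    have : (2 * (m - m') : ℤ) = 1 := by exact_mod_cast hcast
    omega
  -- the bijection for the integer part
  have memA : ∀ x : {x : Fin (8 * k) → ℤ // Even (∑ i, x i)},
      (fun i => ((x.1 i : ℝ))) ∈ A := by
    rintro ⟨x, t, ht⟩
    refine ⟨fun i => ⟨x i, rfl⟩, ⟨t, ?_⟩⟩
    have hc : ((∑ i, x i : ℤ) : ℝ) = ∑ i, ((x i : ℝ)) := by push_cast; rfl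
    rw [← hc, ht]
    push_cast
    ring
  have bijA : Function.Bijective
      (fun x : {x : Fin (8 * k) → ℤ // Even (∑ i, x i)} => (⟨_, memA x⟩ : A)) := by
    constructor
    · intro a b h
      apply Subtype.ext; funext i
      have := congrFun (congrArg Subtype.val h) i
      simp only at this
      exact_mod_cast this
    · rintro ⟨y, hy1, m, hm⟩
      choose f hf using id hy1
      have hsum : ((∑ i, f i : ℤ) : ℝ) = 2 * m := by
        push_cast
        rw [← hm]
        exact Finset.sum_congr rfl fun i _ => (hf i).symm
      have hsum' : (∑ i, f i) = 2 * m := by exact_mod_cast hsum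
      exact ⟨⟨f, ⟨m, by omega⟩⟩, Subtype.ext (funext fun i => (hf i).symm)⟩
  -- the bijection for the half-integer part
  have memB : ∀ x : {x : Fin (8 * k) → ℤ // Even (∑ i, x i)},
      (fun i => ((x.1 i : ℝ) + 1 / 2)) ∈ B := by
    rintro ⟨x, t, ht⟩
    refine ⟨fun i => ⟨x i, rfl⟩, ⟨t + 2 * k, ?_⟩⟩
    rw [Finset.sum_add_distrib, Finset.sum_const, Finset.card_univ, Fintype.card_fin]
    have hc : ((∑ i, x i : ℤ) : ℝ) = ∑ i, ((x i : ℝ)) := by push_cast; rfl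
    rw [← hc, ht]
    push_cast
    ring
  have bijB : Function.Bijective
      (fun x : {x : Fin (8 * k) → ℤ // Even (∑ i, x i)} => (⟨_, memB x⟩ : B)) := by
    constructor
    · intro a b h
      apply Subtype.ext; funext i
      have := congrFun (congrArg Subtype.val h) i
      simp only at this
      have : ((a.1 i : ℝ)) = ((b.1 i : ℝ)) := by linarith
      exact_mod_cast this
    · rintro ⟨y, hy1, m, hm⟩
      choose f hf using id hy1
      have hsum : ((∑ i, f i : ℤ) : ℝ) = 2 * m - 4 * k := by
        have : ∑ i, y i = (∑ i, ((f i : ℝ))) + 4 * k := by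
          rw [show (∑ i, y i) = ∑ i, ((f i : ℝ) + 1 / 2) from
            Finset.sum_congr rfl fun i _ => hf i]
          rw [Finset.sum_add_distrib, Finset.sum_const, Finset.card_univ, Fintype.card_fin]
          norm_num
          ring
        push_cast [this] at hm ⊢
        linarith
      have hsum' : (∑ i, f i) = 2 * m - 4 * k := by exact_mod_cast hsum
      refine ⟨⟨f, ⟨m - 2 * k, by omega⟩⟩, Subtype.ext (funext fun i => (hf i).symm)⟩
  -- transfer the sums
  set eA := Equiv.ofBijective _ bijA with heA
  set eB := Equiv.ofBijective _ bijB with heB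
  have hAsum : (∑' y : A, Fc τ (∑ i, (y.1 i) ^ 2)) =
      ∑' x : {x : Fin (8 * k) → ℤ // Even (∑ i, x i)}, Fc τ (∑ i, ((x.1 i : ℝ)) ^ 2) := by
    rw [← eA.tsum_eq (fun y : A => Fc τ (∑ i, (y.1 i) ^ 2))]
    rfl
  have hBsum : (∑' y : B, Fc τ (∑ i, (y.1 i) ^ 2)) =
      ∑' x : {x : Fin (8 * k) → ℤ // Even (∑ i, x i)},
        Fc τ (∑ i, ((x.1 i : ℝ) + 1 / 2) ^ 2) := by
    rw [← eB.tsum_eq (fun y : B => Fc τ (∑ i, (y.1 i) ^ 2))]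
    rfl
  have sumA : Summable ((fun y : Fin (8 * k) → ℝ => Fc τ (∑ i, (y i) ^ 2)) ∘ ((↑) : A → _)) := by
    rw [← eA.summable_iff]
    exact (S3.subtype {x | Even (∑ i, x i)}).congr fun x => rfl
  have sumB : Summable ((fun y : Fin (8 * k) → ℝ => Fc τ (∑ i, (y i) ^ 2)) ∘ ((↑) : B → _)) := by
    rw [← eB.summable_iff]
    exact (S2.subtype {x | Even (∑ i, x i)}).congr fun x => rfl
  have hTG : ThetaGamma k τ =
      (∑' y : A, Fc τ (∑ i, (y.1 i) ^ 2)) + ∑' y : B, Fc τ (∑ i, (y.1 i) ^ 2) := by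
    have h1 : ThetaGamma k τ = ∑' y : ↥(A ∪ B), Fc τ (∑ i, (y.1 i) ^ 2) := by
      rw [ThetaGamma, hAB]
      rfl
    rw [h1]
    exact Summable.tsum_union_disjoint hdisj sumA sumB
  rw [hTG, hAsum, hBsum]
  linear_combination (-1 / 2 : ℂ) * h34 + (-1 / 2 : ℂ) * h2'
end

section
/- Let k ≥ 3 be an integer and set ℓ = ⌊k/3⌋. For every j with 1 ≤ j ≤ ℓ, there exists φ in the open interval (π(k−ℓ+j−1)/k, π(k−ℓ+j)/k) such that p_{2k}(1 + e^{iφ}) = 0; in particular, p_{2k} has at least ℓ zeros on the arc {1 + e^{iφ} : φ ∈ [2π/3, π]}. -/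
open scoped Real

/-- The polynomial `p_{2k}(z) = 1 + z^{2k} + (1 - z)^{2k}` (as a function on `ℂ`). -/
def pFun (k : ℕ) (z : ℂ) : ℂ := 1 + z ^ (2 * k) + (1 - z) ^ (2 * k)

noncomputable def fR (k : ℕ) (φ : ℝ) : ℝ :=
  2 * Real.cos (k * φ) + (2 * Real.cos (φ / 2)) ^ (2 * k)

lemma key_identity (k : ℕ) (φ : ℝ) :
    pFun k (1 + Complex.exp ((φ : ℂ) * Complex.I)) =
      Complex.exp (((k * φ : ℝ) : ℂ) * Complex.I) * (fR k φ : ℂ) := by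
  set E := Complex.exp (((φ / 2 : ℝ) : ℂ) * Complex.I) with hE
  set F := Complex.exp (-(((φ / 2 : ℝ) : ℂ) * Complex.I)) with hF
  have hEF : E * F = 1 := by rw [hE, hF, ← Complex.exp_add]; simp
  have hexp : Complex.exp ((φ : ℂ) * Complex.I) = E ^ 2 := by
    rw [hE, ← Complex.exp_nat_mul]
    congr 1
    push_cast
    ring
  have hexpk : Complex.exp (((k * φ : ℝ) : ℂ) * Complex.I) = E ^ (2 * k) := by
    rw [hE, ← Complex.exp_nat_mul]
    congr 1
    push_cast
    ring
  have hFk : F ^ (2 * k) = Complex.exp (-(((k * φ : ℝ) : ℂ) * Complex.I)) := by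
    rw [hF, ← Complex.exp_nat_mul]
    congr 1
    push_cast
    ring
  have hcos2 : (2 : ℂ) * Complex.cos ((φ / 2 : ℝ) : ℂ) = E + F := by
    rw [Complex.two_cos, hE, hF, neg_mul]
  have hcosk : (2 : ℂ) * Complex.cos ((k * φ : ℝ) : ℂ) = E ^ (2 * k) + F ^ (2 * k) := by
    rw [Complex.two_cos, hexpk, hFk, neg_mul]
  have hfR : (fR k φ : ℂ) = (E ^ (2 * k) + F ^ (2 * k)) + (E + F) ^ (2 * k) := by
    rw [fR]
    push_cast [Complex.ofReal_cos]
    rw [← hcosk, ← hcos2]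
    push_cast
    ring
  simp only [pFun]
  rw [hexp, hexpk, hfR]
  have h5 : (1 : ℂ) - (1 + E ^ 2) = -(E ^ 2) := by ring
  have h6 : (1 : ℂ) + E ^ 2 = E * (E + F) := by linear_combination (-1 : ℂ) * hEF
  have hpow : (E * F) ^ (2 * k) = 1 := by rw [hEF, one_pow]
  rw [h5, Even.neg_pow (even_two_mul k), h6, mul_pow]
  linear_combination (-1 : ℂ) * hpow

lemma pFun_eq_zero_iff (k : ℕ) (φ : ℝ) :
    pFun k (1 + Complex.exp ((φ : ℂ) * Complex.I)) = 0 ↔ fR k φ = 0 := by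
  rw [key_identity, mul_eq_zero]
  simp [Complex.exp_ne_zero, Complex.ofReal_eq_zero]

lemma fR_pow_mem (k : ℕ) {φ : ℝ} (h1 : 2 * Real.pi / 3 ≤ φ) (h2 : φ ≤ Real.pi) :
    (2 * Real.cos (φ / 2)) ^ (2 * k) ∈ Set.Icc (0 : ℝ) 1 := by
  have hpi := Real.pi_pos
  have hc0 : 0 ≤ Real.cos (φ / 2) :=
    Real.cos_nonneg_of_mem_Icc ⟨by linarith, by linarith⟩
  have hc1 : Real.cos (φ / 2) ≤ Real.cos (Real.pi / 3) :=
    Real.cos_le_cos_of_nonneg_of_le_pi (by positivity) (by linarith) (by linarith)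
  rw [Real.cos_pi_div_three] at hc1
  constructor
  · positivity
  · exact pow_le_one₀ (by linarith) (by linarith)

lemma grid_mem (k : ℕ) (hk : 1 ≤ k) {m : ℕ} (hm1 : 2 * k ≤ 3 * m) (hm2 : m ≤ k) :
    2 * Real.pi / 3 ≤ Real.pi * m / k ∧ Real.pi * m / k ≤ Real.pi := by
  have hpi := Real.pi_pos
  have hk0 : (0 : ℝ) < k := by exact_mod_cast hk
  have h1 : (2 * k : ℝ) ≤ 3 * m := by exact_mod_cast hm1
  have h2 : (m : ℝ) ≤ k := by exact_mod_cast hm2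
  constructor
  · rw [div_le_div_iff₀ (by norm_num) hk0]; nlinarith
  · rw [div_le_iff₀ hk0]; nlinarith

lemma fR_grid (k : ℕ) (hk : 1 ≤ k) {m : ℕ} (hm1 : 2 * k ≤ 3 * m) (hm2 : m ≤ k) :
    fR k (Real.pi * m / k) = 2 * (-1) ^ m + (2 * Real.cos (Real.pi * m / k / 2)) ^ (2 * k) := by
  have hk0 : (k : ℝ) ≠ 0 := by positivity
  have harg : (k : ℝ) * (Real.pi * m / k) = m * Real.pi := by field_simp
  have hcos : Real.cos ((m : ℝ) * Real.pi) = (-1) ^ m := by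
    simpa using Real.cos_nat_mul_pi_sub 0 m
  rw [fR, harg, hcos]

lemma fR_pos (k : ℕ) (hk : 1 ≤ k) {m : ℕ} (hm1 : 2 * k ≤ 3 * m) (hm2 : m ≤ k)
    (hme : Even m) : 0 < fR k (Real.pi * m / k) := by
  obtain ⟨h1, h2⟩ := grid_mem k hk hm1 hm2
  obtain ⟨hp0, hp1⟩ := fR_pow_mem k h1 h2
  rw [fR_grid k hk hm1 hm2, hme.neg_one_pow]
  linarith

lemma fR_neg (k : ℕ) (hk : 1 ≤ k) {m : ℕ} (hm1 : 2 * k ≤ 3 * m) (hm2 : m ≤ k)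
    (hmo : Odd m) : fR k (Real.pi * m / k) < 0 := by
  obtain ⟨h1, h2⟩ := grid_mem k hk hm1 hm2
  obtain ⟨hp0, hp1⟩ := fR_pow_mem k h1 h2
  rw [fR_grid k hk hm1 hm2, hmo.neg_one_pow]
  linarith

lemma my_div_le (a b c : ℝ) (hc : 0 < c) (h : a ≤ b) : a / c ≤ b / c := by gcongr

lemma fR_cont (k : ℕ) : Continuous (fR k) := by
  unfold fR; fun_prop

lemma exists_zero (k : ℕ) (hk : 3 ≤ k) {m : ℕ} (hm1 : 2 * k ≤ 3 * m) (hm2 : m + 1 ≤ k) :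
    ∃ φ ∈ Set.Ioo (Real.pi * m / k) (Real.pi * (m + 1 : ℕ) / k), fR k φ = 0 := by
  have hk1 : 1 ≤ k := by omega
  have hpi := Real.pi_pos
  have hk0 : (0 : ℝ) < k := by exact_mod_cast hk1
  have hab : Real.pi * m / k ≤ Real.pi * (m + 1 : ℕ) / k := by
    have hx : (m : ℝ) ≤ ((m + 1 : ℕ) : ℝ) := by push_cast; linarith
    exact my_div_le _ _ _ hk0 (mul_le_mul_of_nonneg_left hx hpi.le)
  have hm1' : 2 * k ≤ 3 * (m + 1) := by omega
  have hm2' : m ≤ k := by omega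
  have hcont : ContinuousOn (fR k) (Set.Icc (Real.pi * m / k) (Real.pi * (m + 1 : ℕ) / k)) :=
    (fR_cont k).continuousOn
  rcases Nat.even_or_odd m with he | ho
  · have hfa : 0 < fR k (Real.pi * m / k) := fR_pos k hk1 hm1 hm2' he
    have hfb : fR k (Real.pi * (m + 1 : ℕ) / k) < 0 :=
      fR_neg k hk1 hm1' hm2 (Even.add_one he)
    have := intermediate_value_Ioo' hab hcont (a := Real.pi * m / k)
      (b := Real.pi * (m + 1 : ℕ) / k)
    obtain ⟨φ, hφ, hf⟩ := this ⟨hfb, hfa⟩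
    exact ⟨φ, hφ, hf⟩
  · have hfa : fR k (Real.pi * m / k) < 0 := fR_neg k hk1 hm1 hm2' ho
    have hfb : 0 < fR k (Real.pi * (m + 1 : ℕ) / k) :=
      fR_pos k hk1 hm1' hm2 (Odd.add_one ho)
    obtain ⟨φ, hφ, hf⟩ := intermediate_value_Ioo hab hcont ⟨hfa, hfb⟩
    exact ⟨φ, hφ, hf⟩

lemma main_exists (k : ℕ) (hk : 3 ≤ k) (j : ℕ) (hj1 : 1 ≤ j) (hj2 : j ≤ k / 3) :
    ∃ φ : ℝ,
      Real.pi * ((k : ℝ) - ((k / 3 : ℕ) : ℝ) + (j : ℝ) - 1) / (k : ℝ) < φ ∧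
      φ < Real.pi * ((k : ℝ) - ((k / 3 : ℕ) : ℝ) + (j : ℝ)) / (k : ℝ) ∧
      2 * Real.pi / 3 ≤ φ ∧ φ ≤ Real.pi ∧
      pFun k (1 + Complex.exp ((φ : ℂ) * Complex.I)) = 0 := by
  have hk1 : 1 ≤ k := by omega
  set m := k - k / 3 + j - 1 with hm
  have hm1 : 2 * k ≤ 3 * m := by omega
  have hm2 : m + 1 ≤ k := by omega
  obtain ⟨φ, ⟨hφ1, hφ2⟩, hf⟩ := exists_zero k hk hm1 hm2
  have hcast : ((m : ℕ) : ℝ) = (k : ℝ) - ((k / 3 : ℕ) : ℝ) + (j : ℝ) - 1 := by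
    have h : (m : ℕ) + 1 + (k / 3) = k + j := by omega
    have h' : ((m : ℕ) : ℝ) + 1 + ((k / 3 : ℕ) : ℝ) = (k : ℝ) + (j : ℝ) := by
      exact_mod_cast congrArg (Nat.cast : ℕ → ℝ) h
    linarith
  have hcast' : (((m + 1 : ℕ)) : ℝ) = (k : ℝ) - ((k / 3 : ℕ) : ℝ) + (j : ℝ) := by
    push_cast
    linarith [hcast]
  obtain ⟨hg1, hg2⟩ := grid_mem k hk1 hm1 (by omega)
  refine ⟨φ, ?_, ?_, ?_, ?_, ?_⟩
  · rw [← hcast]; exact hφ1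
  · rw [← hcast']; exact hφ2
  · linarith
  · have : Real.pi * ((m + 1 : ℕ) : ℝ) / k ≤ Real.pi := by
      have hpi := Real.pi_pos
      have hk0 : (0 : ℝ) < k := by exact_mod_cast hk1
      rw [div_le_iff₀ hk0]
      have : ((m + 1 : ℕ) : ℝ) ≤ (k : ℝ) := by exact_mod_cast hm2
      nlinarith
    linarith
  · exact (pFun_eq_zero_iff k φ).2 hf

lemma pFun_zero_finite (k : ℕ) (hk : 1 ≤ k) : {z : ℂ | pFun k z = 0}.Finite := by
  have hne : ((1 : Polynomial ℂ) + Polynomial.X ^ (2 * k) + (1 - Polynomial.X) ^ (2 * k)) ≠ 0 := by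
    intro h
    have h0 := congrArg (Polynomial.eval 0) h
    simp [zero_pow (by omega : 2 * k ≠ 0)] at h0
  have hfin := Polynomial.finite_setOf_isRoot hne
  refine hfin.subset ?_
  intro z hz
  simpa [Polynomial.IsRoot, pFun] using hz

theorem stmt7 (k : ℕ) (hk : 3 ≤ k) :
    (∀ j : ℕ, 1 ≤ j → j ≤ k / 3 →
      ∃ φ : ℝ,
        Real.pi * ((k : ℝ) - ((k / 3 : ℕ) : ℝ) + (j : ℝ) - 1) / (k : ℝ) < φ ∧
        φ < Real.pi * ((k : ℝ) - ((k / 3 : ℕ) : ℝ) + (j : ℝ)) / (k : ℝ) ∧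
        pFun k (1 + Complex.exp (φ * Complex.I)) = 0) ∧
    (k / 3 : ℕ) ≤
      {z : ℂ | (∃ φ ∈ Set.Icc (2 * Real.pi / 3) Real.pi,
        z = 1 + Complex.exp (φ * Complex.I)) ∧ pFun k z = 0}.ncard := by
  constructor
  · intro j hj1 hj2
    obtain ⟨φ, h1, h2, _, _, h5⟩ := main_exists k hk j hj1 hj2
    exact ⟨φ, h1, h2, h5⟩
  · set S := {z : ℂ | (∃ φ ∈ Set.Icc (2 * Real.pi / 3) Real.pi,
      z = 1 + Complex.exp (φ * Complex.I)) ∧ pFun k z = 0} with hS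
    have hSfin : S.Finite := by
      refine (pFun_zero_finite k (by omega)).subset ?_
      intro z hz
      exact hz.2
    have hchoice : ∀ j : ℕ, ∃ φ : ℝ, 1 ≤ j → j ≤ k / 3 →
        (Real.pi * ((k : ℝ) - ((k / 3 : ℕ) : ℝ) + (j : ℝ) - 1) / (k : ℝ) < φ ∧
         φ < Real.pi * ((k : ℝ) - ((k / 3 : ℕ) : ℝ) + (j : ℝ)) / (k : ℝ) ∧
         2 * Real.pi / 3 ≤ φ ∧ φ ≤ Real.pi ∧
         pFun k (1 + Complex.exp ((φ : ℂ) * Complex.I)) = 0) := by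
      intro j
      by_cases h : 1 ≤ j ∧ j ≤ k / 3
      · obtain ⟨φ, hφ⟩ := main_exists k hk j h.1 h.2
        exact ⟨φ, fun _ _ => hφ⟩
      · exact ⟨0, fun ha hb => absurd ⟨ha, hb⟩ h⟩
    choose ψ hψ using hchoice
    have hpi := Real.pi_pos
    have hk0 : (0 : ℝ) < k := by
      have : (3 : ℝ) ≤ k := by exact_mod_cast hk
      linarith
    -- key ordering : ψ is strictly monotone on the index range
    have horder : ∀ i j : ℕ, 1 ≤ i → i ≤ k / 3 → 1 ≤ j → j ≤ k / 3 → i < j → ψ i < ψ j := by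
      intro i j hi1 hi2 hj1 hj2 hij
      obtain ⟨_, hi_ub, _, _, _⟩ := hψ i hi1 hi2
      obtain ⟨hj_lb, _, _, _, _⟩ := hψ j hj1 hj2
      have hx : (k : ℝ) - ((k / 3 : ℕ) : ℝ) + (i : ℝ) ≤
          (k : ℝ) - ((k / 3 : ℕ) : ℝ) + (j : ℝ) - 1 := by
        have : (i : ℝ) + 1 ≤ (j : ℝ) := by exact_mod_cast hij
        linarith
      have hmid := my_div_le _ _ _ hk0 (mul_le_mul_of_nonneg_left hx hpi.le)
      linarith
    have hneq : ∀ i j : ℕ, 1 ≤ i → i ≤ k / 3 → 1 ≤ j → j ≤ k / 3 → i < j →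
        (1 : ℂ) + Complex.exp ((ψ i : ℂ) * Complex.I) ≠
          1 + Complex.exp ((ψ j : ℂ) * Complex.I) := by
      intro i j hi1 hi2 hj1 hj2 hij hgij
      have hlt : ψ i < ψ j := horder i j hi1 hi2 hj1 hj2 hij
      obtain ⟨_, _, hi3, hi4, _⟩ := hψ i hi1 hi2
      obtain ⟨_, _, hj3, hj4, _⟩ := hψ j hj1 hj2
      have hexp : Complex.exp ((ψ i : ℂ) * Complex.I) = Complex.exp ((ψ j : ℂ) * Complex.I) :=
        add_left_cancel hgij
      rw [Complex.exp_eq_exp_iff_exists_int] at hexp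
      obtain ⟨n, hn⟩ := hexp
      have h2 : ((ψ i : ℝ) : ℂ) = ((ψ j : ℝ) : ℂ) + (n : ℂ) * (2 * ((Real.pi : ℝ) : ℂ)) := by
        apply mul_right_cancel₀ Complex.I_ne_zero
        rw [hn]; ring
      have hre : ψ i = ψ j + (n : ℝ) * (2 * Real.pi) := by exact_mod_cast h2
      rcases lt_trichotomy n 0 with hn0 | hn0 | hn0
      · have hle : (n : ℝ) ≤ -1 := by exact_mod_cast Int.le_sub_one_of_lt hn0
        nlinarith
      · rw [hn0] at hre; simp at hre; linarith
      · have hle : (1 : ℝ) ≤ (n : ℝ) := by exact_mod_cast hn0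
        nlinarith
    have hinj : Set.InjOn (fun j => (1 : ℂ) + Complex.exp ((ψ j : ℂ) * Complex.I))
        (Finset.Icc 1 (k / 3) : Finset ℕ) := by
      intro i hi j hj hgij
      simp only [Finset.coe_Icc, Set.mem_Icc] at hi hj
      simp only at hgij
      rcases lt_trichotomy i j with h | h | h
      · exact absurd hgij (hneq i j hi.1 hi.2 hj.1 hj.2 h)
      · exact h
      · exact absurd hgij.symm (hneq j i hj.1 hj.2 hi.1 hi.2 h)
    set T : Finset ℂ := (Finset.Icc 1 (k / 3)).image
      (fun j => (1 : ℂ) + Complex.exp ((ψ j : ℂ) * Complex.I)) with hT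
    have hTcard : T.card = k / 3 := by
      rw [hT, Finset.card_image_of_injOn hinj, Nat.card_Icc]
      omega
    have hTsub : (T : Set ℂ) ⊆ S := by
      intro z hz
      simp only [hT, Finset.coe_image, Set.mem_image, Finset.coe_Icc, Set.mem_Icc] at hz
      obtain ⟨j, ⟨hj1, hj2⟩, rfl⟩ := hz
      obtain ⟨_, _, h3, h4, h5⟩ := hψ j hj1 hj2
      exact ⟨⟨ψ j, ⟨h3, h4⟩, rfl⟩, h5⟩
    calc (k / 3 : ℕ) = T.card := hTcard.symm
      _ = (T : Set ℂ).ncard := (Set.ncard_coe_finset T).symm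
      _ ≤ S.ncard := Set.ncard_le_ncard hTsub hSfin
end

section
/- For all real a, b with 2π/3 ≤ a ≤ b ≤ π, the proportion #{φ ∈ [a,b] : p_{2k}(1 + e^{iφ}) = 0} / ⌊k/3⌋ tends to 3(b−a)/π as k → ∞; that is, the zeros of p_{2k} on the arc {1 + e^{iφ} : φ ∈ [2π/3, π]} become equidistributed as k → ∞. -/
open scoped Real

open Set Filter

noncomputable def hh (k : ℕ) (x : ℝ) : ℝ :=
  2 * Real.cos (k * x) + (2 * Real.cos (x / 2)) ^ (2 * k)

lemma one_add_exp (φ : ℝ) :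
    1 + Complex.exp (φ * Complex.I) =
      Complex.exp ((φ / 2 : ℝ) * Complex.I) * ((2 * Real.cos (φ / 2) : ℝ) : ℂ) := by
  have e1 : Complex.exp ((φ/2 : ℝ) * Complex.I) * Complex.exp ((φ/2 : ℝ) * Complex.I)
      = Complex.exp ((φ:ℂ) * Complex.I) := by
    rw [← Complex.exp_add]; congr 1; push_cast; ring
  have e2 : Complex.exp ((φ/2 : ℝ) * Complex.I) * Complex.exp (-((φ/2 : ℝ):ℂ) * Complex.I)
      = 1 := by
    rw [← Complex.exp_add, show ((φ/2 : ℝ):ℂ) * Complex.I + -((φ/2 : ℝ):ℂ) * Complex.I = 0 by ring,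
      Complex.exp_zero]
  push_cast [Complex.ofReal_cos] at e1 e2 ⊢
  simp only [Complex.cos]
  linear_combination -e1 - e2

lemma pFun_eq_hh (k : ℕ) (φ : ℝ) :
    pFun k (1 + Complex.exp (φ * Complex.I)) =
      Complex.exp (((k * φ : ℝ) : ℂ) * Complex.I) * ((hh k φ : ℝ) : ℂ) := by
  have h1 : (1 : ℂ) - (1 + Complex.exp (φ * Complex.I)) = -Complex.exp ((φ:ℂ) * Complex.I) := by
    ring
  unfold pFun
  rw [h1, one_add_exp φ, Even.neg_pow ⟨k, by ring⟩, mul_pow]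
  have f1 : Complex.exp (((φ/2 : ℝ):ℂ) * Complex.I) ^ (2*k)
      = Complex.exp (((k * φ : ℝ) : ℂ) * Complex.I) := by
    rw [← Complex.exp_nat_mul]; congr 1; push_cast; ring
  have f2 : Complex.exp ((φ:ℂ) * Complex.I) ^ (2*k)
      = Complex.exp (((k * φ : ℝ) : ℂ) * Complex.I) ^ 2 := by
    rw [← Complex.exp_nat_mul, ← Complex.exp_nat_mul]; congr 1; push_cast; ring
  rw [f1, f2]
  have e2 : Complex.exp (((k * φ : ℝ) : ℂ) * Complex.I)
      * Complex.exp (-((k * φ : ℝ):ℂ) * Complex.I) = 1 := by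
    rw [← Complex.exp_add, show ((k * φ : ℝ):ℂ) * Complex.I + -((k * φ : ℝ):ℂ) * Complex.I = 0
      by ring, Complex.exp_zero]
  unfold hh
  push_cast [Complex.ofReal_cos] at e2 ⊢
  simp only [Complex.cos]
  linear_combination -e2

lemma hh_cont (k : ℕ) : Continuous (hh k) := by
  unfold hh; fun_prop

lemma hh_hasDerivAt (k : ℕ) (x : ℝ) :
    HasDerivAt (hh k)
      (-(2 * k) * Real.sin (k * x)
        - (2 * k) * Real.sin (x / 2) * (2 * Real.cos (x / 2)) ^ (2 * k - 1)) x := by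
  have h1 : HasDerivAt (fun y : ℝ => 2 * Real.cos (k * y)) (-(2 * k) * Real.sin (k * x)) x := by
    have hi : HasDerivAt (fun y : ℝ => (k : ℝ) * y) (k : ℝ) x := by
      simpa using (hasDerivAt_id x).const_mul (k : ℝ)
    have := ((Real.hasDerivAt_cos ((k : ℝ) * x)).comp x hi).const_mul 2
    exact this.congr_deriv (by ring)
  have h2 : HasDerivAt (fun y : ℝ => (2 * Real.cos (y / 2)) ^ (2 * k))
      (-(2 * k) * Real.sin (x / 2) * (2 * Real.cos (x / 2)) ^ (2 * k - 1)) x := by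
    have hi : HasDerivAt (fun y : ℝ => y / 2) (1 / 2 : ℝ) x := by
      simpa using (hasDerivAt_id x).div_const 2
    have hin : HasDerivAt (fun y : ℝ => 2 * Real.cos (y / 2)) (-Real.sin (x / 2)) x := by
      have := ((Real.hasDerivAt_cos (x / 2)).comp x hi).const_mul 2
      exact this.congr_deriv (by ring)
    have := hin.pow (2 * k)
    exact this.congr_deriv (by push_cast; ring)
  have := h1.add h2
  exact this.congr_deriv (by ring)

/-- no zeros of `hh` at branch endpoints within `[2π/3, π]` -/
lemma hh_ne_zero_endpoint {k : ℕ} {x : ℝ} (hx : x ∈ Icc (2 * π / 3) π) {j : ℕ}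
    (hj : (k : ℝ) * x = j * π) : hh k x ≠ 0 := by
  have hpi := Real.pi_pos
  have hx1 : π / 3 ≤ x / 2 := by obtain ⟨h, _⟩ := hx; linarith
  have hx2 : x / 2 ≤ π / 2 := by obtain ⟨_, h⟩ := hx; linarith
  have hc0 : 0 ≤ Real.cos (x / 2) :=
    Real.cos_nonneg_of_mem_Icc ⟨by linarith, hx2⟩
  have hc1 : Real.cos (x / 2) ≤ 1 / 2 := by
    have := Real.cos_le_cos_of_nonneg_of_le_pi (by positivity : (0:ℝ) ≤ π / 3)
      (by linarith) hx1
    rwa [Real.cos_pi_div_three] at this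
  have hcpow : (2 * Real.cos (x / 2)) ^ (2 * k) ≤ 1 := by
    apply pow_le_one₀ (by linarith) (by linarith)
  have hcpow0 : 0 ≤ (2 * Real.cos (x / 2)) ^ (2 * k) := by positivity
  have hcos : Real.cos ((k : ℝ) * x) = (-1 : ℝ) ^ j := by
    rw [hj, show (j : ℝ) * π = 0 + (j : ℝ) * π by ring, Real.cos_add_nat_mul_pi, Real.cos_zero,
      mul_one]
  unfold hh
  rw [hcos]
  rcases Nat.even_or_odd j with hj2 | hj2
  · rw [hj2.neg_one_pow]; intro h; linarith
  · rw [hj2.neg_one_pow]; intro h; linarith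

/-- derivative comparison at zeros: `(sin(x/2) * c^(2k-1))^2 < sin(kx)^2`. -/
lemma sq_lt {k : ℕ} (hk : 1 ≤ k) {x : ℝ} (hc : |2 * Real.cos (x / 2)| < 1)
    (hz : hh k x = 0) :
    (Real.sin (x / 2) * (2 * Real.cos (x / 2)) ^ (2 * k - 1)) ^ 2
      < Real.sin ((k : ℝ) * x) ^ 2 := by
  set c := 2 * Real.cos (x / 2) with hcdef
  set q := c ^ (2 * k - 1) with hqdef
  have hq1 : q ^ 2 < 1 := by
    have h1 : |q| < 1 := by
      rw [hqdef, abs_pow]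
      exact pow_lt_one₀ (abs_nonneg _) hc (by omega)
    calc q ^ 2 = |q| ^ 2 := (sq_abs q).symm
    _ < 1 := by nlinarith [abs_nonneg q]
  have hck : c ^ (2 * k) = q * c := by
    rw [hqdef, ← pow_succ]
    congr 1
    omega
  have hcos : Real.cos ((k : ℝ) * x) = -(q * c) / 2 := by
    unfold hh at hz
    rw [hck] at hz
    linarith
  have hs1 : Real.sin ((k:ℝ) * x) ^ 2 = 1 - (q * c) ^ 2 / 4 := by
    have := Real.sin_sq_add_cos_sq ((k:ℝ) * x)
    rw [hcos] at this
    nlinarith [this]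
  have hs2 : Real.sin (x / 2) ^ 2 = 1 - c ^ 2 / 4 := by
    have h := Real.sin_sq_add_cos_sq (x / 2)
    rw [hcdef]
    nlinarith [h]
  have key : (Real.sin (x / 2)) ^ 2 * q ^ 2 < 1 - (q * c) ^ 2 / 4 := by
    rw [hs2]
    nlinarith [sq_nonneg c, sq_nonneg q, sq_nonneg (q * c)]
  calc (Real.sin (x / 2) * q) ^ 2 = Real.sin (x / 2) ^ 2 * q ^ 2 := by ring
  _ < 1 - (q * c) ^ 2 / 4 := key
  _ = Real.sin ((k:ℝ) * x) ^ 2 := hs1.symm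

/-- near a zero with strictly negative derivative, f is positive just left and negative just
right -/
lemma sign_near_zero {f : ℝ → ℝ} {x d : ℝ} (hd : HasDerivAt f d x) (hdneg : d < 0)
    (hz : f x = 0) :
    (∀ᶠ z in nhdsWithin x (Iio x), 0 < f z) ∧ (∀ᶠ z in nhdsWithin x (Ioi x), f z < 0) := by
  have hslope : Tendsto (slope f x) (nhdsWithin x {x}ᶜ) (nhds d) :=
    hasDerivAt_iff_tendsto_slope.1 hd
  have hev : ∀ᶠ z in nhdsWithin x {x}ᶜ, slope f x z < 0 :=
    hslope.eventually (Filter.Tendsto.eventually_lt_const hdneg tendsto_id)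
  constructor
  · have h1 : ∀ᶠ z in nhdsWithin x (Iio x), slope f x z < 0 :=
      hev.filter_mono (nhdsWithin_mono x fun z hz => ne_of_lt hz)
    filter_upwards [h1, self_mem_nhdsWithin] with z hs hlt
    rw [slope_def_field] at hs
    have hzx : z - x < 0 := sub_neg.2 hlt
    rw [div_neg_iff] at hs
    rcases hs with ⟨h1, h2⟩ | ⟨h1, h2⟩
    · linarith
    · rw [hz] at h1; linarith
  · have h1 : ∀ᶠ z in nhdsWithin x (Ioi x), slope f x z < 0 :=
      hev.filter_mono (nhdsWithin_mono x fun z hz => ne_of_gt hz)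
    filter_upwards [h1, self_mem_nhdsWithin] with z hs hlt
    rw [slope_def_field] at hs
    have hzx : 0 < z - x := sub_pos.2 hlt
    rw [div_neg_iff] at hs
    rcases hs with ⟨h1, h2⟩ | ⟨h1, h2⟩
    · linarith
    · rw [hz] at h1; linarith

lemma zeros_subsingleton {f : ℝ → ℝ} (hc : Continuous f) {u v : ℝ}
    (hder : ∀ x ∈ Ioo u v, f x = 0 → ∃ d, d < 0 ∧ HasDerivAt f d x) :
    {x ∈ Ioo u v | f x = 0}.Subsingleton := by
  intro x hx y hy
  by_contra hne
  -- wlog x < y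
  wlog hlt : x < y generalizing x y
  · exact this hy hx (Ne.symm hne) (lt_of_le_of_ne (not_lt.1 hlt) (Ne.symm hne))
  obtain ⟨hxI, hxz⟩ := hx
  obtain ⟨hyI, hyz⟩ := hy
  obtain ⟨dx, hdx, hdx'⟩ := hder x hxI hxz
  obtain ⟨_, hxneg⟩ := sign_near_zero hdx' hdx hxz
  -- find w ∈ (x, y) with f w < 0
  have hIoo : Ioo x y ∈ nhdsWithin x (Ioi x) := Ioo_mem_nhdsGT_of_mem ⟨le_refl x, hlt⟩
  obtain ⟨w, hw1, hw2⟩ := (hxneg.and (eventually_of_mem hIoo fun z hz => hz)).exists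
  -- least zero in [w, y]
  set T := Icc w y ∩ f ⁻¹' {0} with hT
  have hTclosed : IsClosed T := isClosed_Icc.inter (isClosed_singleton.preimage hc)
  have hTne : T.Nonempty := ⟨y, ⟨hw2.2.le, le_refl y⟩, hyz⟩
  have hTbdd : BddBelow T := ⟨w, fun t ht => ht.1.1⟩
  set z := sInf T with hz
  have hzT : z ∈ T := hTclosed.csInf_mem hTne hTbdd
  have hzw : w < z := by
    rcases lt_or_eq_of_le hzT.1.1 with h | h
    · exact h
    · exfalso; have : f w = 0 := by rw [h]; exact hzT.2
      linarith [hw1]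
  have hzy : z ≤ y := hzT.1.2
  have hzI : z ∈ Ioo u v := ⟨lt_trans hxI.1 (lt_trans hw2.1 hzw), lt_of_le_of_lt hzy hyI.2⟩
  obtain ⟨dz, hdz, hdz'⟩ := hder z hzI hzT.2
  obtain ⟨hzpos, _⟩ := sign_near_zero hdz' hdz hzT.2
  -- find w' ∈ (w, z) with f w' > 0
  have hIoo' : Ioo w z ∈ nhdsWithin z (Iio z) := Ioo_mem_nhdsLT_of_mem ⟨hzw, le_refl z⟩
  obtain ⟨w', hw'1, hw'2⟩ := (hzpos.and (eventually_of_mem hIoo' fun s hs => hs)).exists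
  -- IVT on [w, w'] : a zero strictly below z in T, contradiction
  have hww' : w ≤ w' := hw'2.1.le
  have h0mem : (0 : ℝ) ∈ Icc (f w) (f w') := ⟨hw1.le, hw'1.le⟩
  obtain ⟨z', hz'mem, hz'0⟩ := intermediate_value_Icc hww' (hc.continuousOn) h0mem
  have hz'T : z' ∈ T := ⟨⟨hz'mem.1, le_trans hz'mem.2 (le_trans hw'2.2.le hzy)⟩, hz'0⟩
  have : z ≤ z' := csInf_le hTbdd hz'T
  have : z' < z := lt_of_le_of_lt hz'mem.2 hw'2.2
  linarith
lemma cpow_mem {k : ℕ} {x : ℝ} (hx : x ∈ Icc (2 * π / 3) π) :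
    (2 * Real.cos (x / 2)) ^ (2 * k) ∈ Icc (0 : ℝ) 1 := by
  have hpi := Real.pi_pos
  have hx1 : π / 3 ≤ x / 2 := by obtain ⟨h, _⟩ := hx; linarith
  have hx2 : x / 2 ≤ π / 2 := by obtain ⟨_, h⟩ := hx; linarith
  have hc0 : 0 ≤ Real.cos (x / 2) := Real.cos_nonneg_of_mem_Icc ⟨by linarith, hx2⟩
  have hc1 : Real.cos (x / 2) ≤ 1 / 2 := by
    have := Real.cos_le_cos_of_nonneg_of_le_pi (by positivity : (0:ℝ) ≤ π / 3)
      (by linarith) hx1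
    rwa [Real.cos_pi_div_three] at this
  exact ⟨by positivity, pow_le_one₀ (by linarith) (by linarith)⟩

lemma cos_nat_pi (j : ℕ) : Real.cos ((j : ℝ) * π) = (-1 : ℝ) ^ j := by
  rw [show (j : ℝ) * π = 0 + (j : ℝ) * π by ring, Real.cos_add_nat_mul_pi, Real.cos_zero,
    mul_one]

lemma branch_exists {k : ℕ} (hk : 1 ≤ k) {a b : ℝ} (ha2 : 2 * π / 3 ≤ a) (hb : b ≤ π)
    (j : ℕ) (hu : a ≤ (j : ℝ) * π / k) (hv : ((j : ℝ) + 1) * π / k ≤ b) :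
    ∃ x ∈ Ioo ((j : ℝ) * π / k) (((j : ℝ) + 1) * π / k), hh k x = 0 := by
  have hpi := Real.pi_pos
  have hk0 : (0 : ℝ) < k := by exact_mod_cast hk
  set u := (j : ℝ) * π / k with hudef
  set v := ((j : ℝ) + 1) * π / k with hvdef
  have huv : u < v := by
    rw [hudef, hvdef, div_lt_div_iff₀ hk0 hk0]
    nlinarith
  have huI : u ∈ Icc (2 * π / 3) π := ⟨le_trans ha2 hu, by linarith [le_trans huv.le hv, hb]⟩
  have hvI : v ∈ Icc (2 * π / 3) π := ⟨le_trans ha2 (le_trans hu huv.le), le_trans hv hb⟩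
  have hku : (k : ℝ) * u = (j : ℝ) * π := by rw [hudef]; field_simp
  have hkv : (k : ℝ) * v = ((j : ℝ) + 1) * π := by rw [hvdef]; field_simp
  have hhu : hh k u = (-1 : ℝ) ^ j * 2 + (2 * Real.cos (u / 2)) ^ (2 * k) := by
    unfold hh; rw [hku, cos_nat_pi]; ring
  have hhv : hh k v = -((-1 : ℝ) ^ j) * 2 + (2 * Real.cos (v / 2)) ^ (2 * k) := by
    unfold hh
    rw [hkv, show ((j : ℝ) + 1) * π = ((j + 1 : ℕ) : ℝ) * π by push_cast; ring,
      cos_nat_pi, pow_succ]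
    ring
  have htu := cpow_mem (k := k) huI
  have htv := cpow_mem (k := k) hvI
  rcases Nat.even_or_odd j with hj2 | hj2
  · rw [hj2.neg_one_pow] at hhu hhv
    have h0 : (0 : ℝ) ∈ Ioo (hh k v) (hh k u) := by
      constructor
      · rw [hhv]; obtain ⟨_, h⟩ := htv; linarith
      · rw [hhu]; obtain ⟨h, _⟩ := htu; linarith
    obtain ⟨x, hx1, hx2⟩ := intermediate_value_Ioo' huv.le (hh_cont k).continuousOn h0
    exact ⟨x, hx1, hx2⟩
  · rw [hj2.neg_one_pow] at hhu hhv
    have h0 : (0 : ℝ) ∈ Ioo (hh k u) (hh k v) := by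
      constructor
      · rw [hhu]; obtain ⟨_, h⟩ := htu; linarith
      · rw [hhv]; obtain ⟨h, _⟩ := htv; linarith
    obtain ⟨x, hx1, hx2⟩ := intermediate_value_Ioo huv.le (hh_cont k).continuousOn h0
    exact ⟨x, hx1, hx2⟩

lemma branch_subsing {k : ℕ} (hk : 4 ≤ k) {j : ℕ} (hj : (j : ℝ) * π / k ≤ π) :
    {x ∈ Ioo (max ((j : ℝ) * π / k) (2 * π / 3)) (((j : ℝ) + 1) * π / k) |
      hh k x = 0}.Subsingleton := by
  have hpi := Real.pi_pos
  have hk0 : (0 : ℝ) < k := by positivity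
  have hk4 : (4 : ℝ) ≤ k := by exact_mod_cast hk
  set u := max ((j : ℝ) * π / k) (2 * π / 3) with hudef
  set v := ((j : ℝ) + 1) * π / k with hvdef
  -- the main derivative fact
  have main : ∀ x ∈ Ioo u v, hh k x = 0 →
      |Real.sin (x / 2) * (2 * Real.cos (x / 2)) ^ (2 * k - 1)| < |Real.sin ((k : ℝ) * x)| ∧
      ((Even j → 0 < Real.sin ((k : ℝ) * x)) ∧ (Odd j → Real.sin ((k : ℝ) * x) < 0)) := by
    intro x hx hhx
    have hx23 : 2 * π / 3 < x := lt_of_le_of_lt (le_max_right _ _) hx.1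
    have hxv : x < v := hx.2
    have hvb : v ≤ π + π / k := by
      have he : v = (j : ℝ) * π / k + π / k := by rw [hvdef]; ring
      linarith [hj, he.le]
    -- |2 cos (x/2)| < 1
    have habs : |2 * Real.cos (x / 2)| < 1 := by
      have hxub : x / 2 < π / 2 + π / (2 * k) := by
        have h1 : x < π + π / k := lt_of_lt_of_le hxv hvb
        have h2 : π / (k : ℝ) / 2 = π / (2 * k) := by ring
        linarith
      have hxlb : π / 3 < x / 2 := by linarith
      have hx2pi : x / 2 ≤ π := by
        have hkinv : π / (2 * k) ≤ π / 2 := by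
          apply div_le_div_of_nonneg_left hpi.le (by norm_num)
          linarith
        linarith
      have hlt : Real.cos (x / 2) < 1 / 2 := by
        have := Real.cos_lt_cos_of_nonneg_of_le_pi (by positivity : (0:ℝ) ≤ π / 3)
          hx2pi hxlb
        rwa [Real.cos_pi_div_three] at this
      have hgt : -(1 / 2 : ℝ) < Real.cos (x / 2) := by
        have hmon : Real.cos (π / 2 + π / (2 * k)) ≤ Real.cos (x / 2) := by
          apply Real.cos_le_cos_of_nonneg_of_le_pi (by linarith)
          · have : π / (2 * k) ≤ π / 2 := by
              apply div_le_div_of_nonneg_left hpi.le (by norm_num); linarith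
            linarith
          · exact hxub.le
        have : Real.cos (π / 2 + π / (2 * k)) = -Real.sin (π / (2 * k)) := by
          rw [add_comm, Real.cos_add_pi_div_two]
        have hsin : Real.sin (π / (2 * k)) ≤ π / (2 * k) :=
          Real.sin_le (by positivity)
        have hsmall : π / (2 * k) ≤ π / 8 := by
          apply div_le_div_of_nonneg_left hpi.le (by norm_num); linarith
        have hpi4 : π < 4 := by linarith [Real.pi_lt_d2]
        nlinarith
      rw [abs_lt]; constructor <;> nlinarith
    have hsq := sq_lt (k := k) (by omega) habs hhx
    have habs2 : |Real.sin (x / 2) * (2 * Real.cos (x / 2)) ^ (2 * k - 1)|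
        < |Real.sin ((k : ℝ) * x)| := sq_lt_sq.1 hsq
    refine ⟨habs2, ?_, ?_⟩
    all_goals intro hpar
    all_goals
      have hxu : (j : ℝ) * π / k ≤ u := le_max_left _ _
      have hkx1 : (j : ℝ) * π < (k : ℝ) * x := by
        have : (j : ℝ) * π / k < x := lt_of_le_of_lt hxu hx.1
        rw [div_lt_iff₀ hk0] at this; linarith
      have hkx2 : (k : ℝ) * x < ((j : ℝ) + 1) * π := by
        have : x < ((j : ℝ) + 1) * π / k := hx.2
        rw [lt_div_iff₀ hk0] at this; linarith
      have hsin : Real.sin ((k : ℝ) * x) = (-1 : ℝ) ^ j * Real.sin ((k : ℝ) * x - j * π) := by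
        rw [← Real.sin_add_nat_mul_pi ((k : ℝ) * x - j * π) j]; ring_nf
      have hspos : 0 < Real.sin ((k : ℝ) * x - j * π) :=
        Real.sin_pos_of_pos_of_lt_pi (by linarith) (by linarith)
    · rw [hsin, hpar.neg_one_pow]; linarith
    · rw [hsin, hpar.neg_one_pow]; nlinarith
  -- now apply the subsingleton lemma, according to parity
  rcases Nat.even_or_odd j with hj2 | hj2
  · apply zeros_subsingleton (hh_cont k)
    intro x hx hhx
    obtain ⟨habs2, hsgn, _⟩ := main x hx hhx
    have hspos := hsgn hj2
    refine ⟨_, ?_, hh_hasDerivAt k x⟩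
    have h1 : -|Real.sin (x / 2) * (2 * Real.cos (x / 2)) ^ (2 * k - 1)|
        ≤ Real.sin (x / 2) * (2 * Real.cos (x / 2)) ^ (2 * k - 1) := neg_abs_le _
    have h2 : |Real.sin ((k:ℝ) * x)| = Real.sin ((k:ℝ) * x) := abs_of_pos hspos
    have hsum : 0 < Real.sin ((k:ℝ) * x)
        + Real.sin (x / 2) * (2 * Real.cos (x / 2)) ^ (2 * k - 1) := by
      rw [h2] at habs2; linarith
    have hmul := mul_pos (show (0:ℝ) < 2 * k by linarith) hsum
    nlinarith [hmul]
  · have heq : {x ∈ Ioo u v | hh k x = 0}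
        = {x ∈ Ioo u v | (fun y => -(hh k y)) x = 0} := by
      ext x; simp [neg_eq_zero]
    rw [heq]
    apply zeros_subsingleton (hh_cont k).neg
    intro x hx hhx
    rw [Pi.neg_apply, neg_eq_zero] at hhx
    obtain ⟨habs2, _, hsgn⟩ := main x hx hhx
    have hsneg := hsgn hj2
    refine ⟨_, ?_, (hh_hasDerivAt k x).neg⟩
    have h1 : Real.sin (x / 2) * (2 * Real.cos (x / 2)) ^ (2 * k - 1)
        ≤ |Real.sin (x / 2) * (2 * Real.cos (x / 2)) ^ (2 * k - 1)| := le_abs_self _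
    have h2 : |Real.sin ((k:ℝ) * x)| = -Real.sin ((k:ℝ) * x) := abs_of_neg hsneg
    have hsum : Real.sin ((k:ℝ) * x)
        + Real.sin (x / 2) * (2 * Real.cos (x / 2)) ^ (2 * k - 1) < 0 := by
      rw [h2] at habs2; linarith
    have hmul := mul_pos (show (0:ℝ) < 2 * k by linarith) (neg_pos.2 hsum)
    nlinarith [hmul]
lemma counting {a b : ℝ} (ha : 2 * π / 3 ≤ a) (hab : a ≤ b) (hb : b ≤ π)
    {k : ℕ} (hk : 4 ≤ k) :
    ({φ : ℝ | φ ∈ Icc a b ∧ hh k φ = 0}).Finite ∧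
      (({φ : ℝ | φ ∈ Icc a b ∧ hh k φ = 0}).ncard : ℝ) ≤ (k : ℝ) * (b - a) / π + 3 ∧
      (k : ℝ) * (b - a) / π - 3 ≤ (({φ : ℝ | φ ∈ Icc a b ∧ hh k φ = 0}).ncard : ℝ) := by
  classical
  have hpi := Real.pi_pos
  have hk0 : (0 : ℝ) < k := by positivity
  have hk4 : (4 : ℝ) ≤ k := by exact_mod_cast hk
  have ha0 : 0 < a := by nlinarith
  have hb0 : 0 < b := lt_of_lt_of_le ha0 hab
  have hdiff : (k : ℝ) * (b - a) / π = (k : ℝ) * b / π - (k : ℝ) * a / π := by ring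
  set S := {φ : ℝ | φ ∈ Icc a b ∧ hh k φ = 0} with hSdef
  set S' := S \ {2 * π / 3} with hS'def
  have hsub : ∀ φ ∈ S, φ ∈ Icc (2 * π / 3) π := by
    rintro φ ⟨⟨h1, h2⟩, _⟩
    exact ⟨le_trans ha h1, le_trans h2 hb⟩
  set f : ℝ → ℕ := fun φ => ⌊(k : ℝ) * φ / π⌋₊ with hfdef
  set m : ℕ := ⌊(k : ℝ) * a / π⌋₊ with hmdef
  set n : ℕ := ⌊(k : ℝ) * b / π⌋₊ with hndef
  have hmn : m ≤ n := Nat.floor_mono (by gcongr)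
  -- each element of S' lies strictly inside its branch
  have hmem : ∀ φ ∈ S', ((f φ : ℝ) * π / k ≤ π ∧
      φ ∈ Ioo (max ((f φ : ℝ) * π / k) (2 * π / 3)) (((f φ : ℝ) + 1) * π / k)) := by
    rintro φ ⟨hφS, hφne⟩
    have hφI := hsub φ hφS
    have hφ0 : 0 < φ := by have := hφI.1; nlinarith
    have hφ23 : 2 * π / 3 < φ :=
      lt_of_le_of_ne hφI.1 (fun h => hφne (by simp [← h]))
    have hx0 : 0 ≤ (k : ℝ) * φ / π := by positivity
    have hfl : (f φ : ℝ) ≤ (k : ℝ) * φ / π := Nat.floor_le hx0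
    have hfu : (k : ℝ) * φ / π < (f φ : ℝ) + 1 := Nat.lt_floor_add_one _
    have h1 : (f φ : ℝ) * π / k ≤ φ := by
      rw [div_le_iff₀ hk0]
      rw [le_div_iff₀ hpi] at hfl
      linarith
    have h2 : φ < ((f φ : ℝ) + 1) * π / k := by
      rw [lt_div_iff₀ hk0]
      rw [div_lt_iff₀ hpi] at hfu
      linarith
    have h1' : (f φ : ℝ) * π / k < φ := by
      rcases lt_or_eq_of_le h1 with h | h
      · exact h
      · exfalso
        have hkφ : (k : ℝ) * φ = (f φ : ℝ) * π := by
          have heq : (k : ℝ) * ((f φ : ℝ) * π / k) = (f φ : ℝ) * π := by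
            rw [mul_comm, div_mul_cancel₀ _ (ne_of_gt hk0)]
          rw [h] at heq
          exact heq
        exact hh_ne_zero_endpoint hφI hkφ hφS.2
    refine ⟨by linarith [hφI.2], ⟨max_lt h1' hφ23, h2⟩⟩
  -- upper bound via injection into branch indices
  have hmaps : ∀ φ ∈ S', f φ ∈ ((Finset.Icc m n : Finset ℕ) : Set ℕ) := by
    rintro φ ⟨hφS, _⟩
    obtain ⟨⟨h1, h2⟩, _⟩ := hφS
    rw [Finset.mem_coe, Finset.mem_Icc]
    constructor
    · exact Nat.floor_mono (by gcongr)
    · exact Nat.floor_mono (by gcongr)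
  have hinj : Set.InjOn f S' := by
    intro x hx y hy hxy
    obtain ⟨hjx, hxmem⟩ := hmem x hx
    obtain ⟨hjy, hymem⟩ := hmem y hy
    have := branch_subsing hk (j := f x) hjx
    apply this ⟨hxmem, hx.1.2⟩
    rw [hxy]
    exact ⟨hymem, hy.1.2⟩
  have hS'fin : S'.Finite := by
    apply Set.Finite.of_finite_image _ hinj
    exact Set.Finite.subset (Finset.Icc m n).finite_toSet (by
      rintro j ⟨φ, hφ, rfl⟩; exact hmaps φ hφ)
  have hSfin : S.Finite := by
    apply Set.Finite.subset (hS'fin.union (Set.finite_singleton (2 * π / 3)))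
    intro φ hφ
    by_cases h : φ = 2 * π / 3
    · exact Or.inr (by simp [h])
    · exact Or.inl ⟨hφ, by simp [h]⟩
  refine ⟨hSfin, ?_, ?_⟩
  · -- upper bound
    have h1 : S'.ncard ≤ (Finset.Icc m n).card := by
      have := Set.ncard_le_ncard_of_injOn f hmaps hinj (Finset.Icc m n).finite_toSet
      rwa [Set.ncard_coe_finset] at this
    have h2 : S.ncard ≤ S'.ncard + 1 := by
      calc S.ncard ≤ (S' ∪ {2 * π / 3}).ncard := by
            apply Set.ncard_le_ncard _ (hS'fin.union (Set.finite_singleton _))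
            intro φ hφ
            by_cases h : φ = 2 * π / 3
            · exact Or.inr (by simp [h])
            · exact Or.inl ⟨hφ, by simp [h]⟩
      _ ≤ S'.ncard + ({2 * π / 3} : Set ℝ).ncard := Set.ncard_union_le _ _
      _ = S'.ncard + 1 := by rw [Set.ncard_singleton]
    have hcard : (Finset.Icc m n).card = n + 1 - m := Nat.card_Icc m n
    have hcardR : ((Finset.Icc m n).card : ℝ) = (n : ℝ) + 1 - m := by
      rw [hcard]; push_cast [Nat.cast_sub (by omega : m ≤ n + 1)]; ring
    have hnR : (n : ℝ) ≤ (k : ℝ) * b / π :=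
      Nat.floor_le (div_nonneg (by positivity) hpi.le)
    have hmR : (k : ℝ) * a / π - 1 < (m : ℝ) := by
      have := Nat.lt_floor_add_one ((k : ℝ) * a / π)
      linarith
    have : (S.ncard : ℝ) ≤ ((Finset.Icc m n).card : ℝ) + 1 := by
      have h2' : (S.ncard : ℝ) ≤ (S'.ncard : ℝ) + 1 := by exact_mod_cast h2
      have h1' : (S'.ncard : ℝ) ≤ ((Finset.Icc m n).card : ℝ) := by exact_mod_cast h1
      linarith
    rw [hcardR] at this
    rw [hdiff]
    linarith
  · -- lower bound
    set m0 : ℕ := ⌈(k : ℝ) * a / π⌉₊ with hm0def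
    set m1 : ℕ := n - 1 with hm1def
    have hn1 : 1 ≤ n := by
      apply Nat.le_floor
      push_cast
      rw [le_div_iff₀ hpi]
      nlinarith
    have hex : ∀ j ∈ (Finset.Icc m0 m1 : Finset ℕ),
        ∃ x, x ∈ Ioo ((j : ℝ) * π / k) (((j : ℝ) + 1) * π / k) ∧ x ∈ S := by
      intro j hj
      rw [Finset.mem_Icc] at hj
      have hu : a ≤ (j : ℝ) * π / k := by
        have : (k : ℝ) * a / π ≤ (j : ℝ) := by
          exact_mod_cast Nat.ceil_le.1 hj.1
        rw [le_div_iff₀ hk0]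
        rw [div_le_iff₀ hpi] at this
        linarith
      have hv : ((j : ℝ) + 1) * π / k ≤ b := by
        have hj1 : j + 1 ≤ n := by omega
        have : ((j : ℝ) + 1) ≤ (n : ℝ) := by exact_mod_cast hj1
        have hnb : (n : ℝ) ≤ (k : ℝ) * b / π :=
          Nat.floor_le (div_nonneg (by positivity) hpi.le)
        rw [div_le_iff₀ hk0]
        rw [le_div_iff₀ hpi] at hnb
        nlinarith
      obtain ⟨x, hx1, hx2⟩ := branch_exists (by omega : 1 ≤ k) ha hb j hu hv
      refine ⟨x, hx1, ⟨⟨le_trans hu hx1.1.le, le_trans hx1.2.le hv⟩, hx2⟩⟩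
    set g : ℕ → ℝ := fun j =>
      if h : ∃ x, x ∈ Ioo ((j : ℝ) * π / k) (((j : ℝ) + 1) * π / k) ∧ x ∈ S
      then h.choose else 0 with hgdef
    have hgspec : ∀ j ∈ (Finset.Icc m0 m1 : Finset ℕ),
        g j ∈ Ioo ((j : ℝ) * π / k) (((j : ℝ) + 1) * π / k) ∧ g j ∈ S := by
      intro j hj
      have h := hex j hj
      rw [hgdef]
      simp only [dif_pos h]
      exact h.choose_spec
    have hmaps2 : ∀ j ∈ ((Finset.Icc m0 m1 : Finset ℕ) : Set ℕ), g j ∈ S := by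
      intro j hj
      exact (hgspec j (by exact_mod_cast hj)).2
    have hinj2 : Set.InjOn g ((Finset.Icc m0 m1 : Finset ℕ) : Set ℕ) := by
      intro x hx y hy hxy
      by_contra hne
      wlog hlt : x < y generalizing x y
      · exact this hy hx hxy.symm (Ne.symm hne) (by omega)
      have h1 := (hgspec x (by exact_mod_cast hx)).1
      have h2 := (hgspec y (by exact_mod_cast hy)).1
      have : ((x : ℝ) + 1) * π / k ≤ (y : ℝ) * π / k := by
        gcongr
        exact_mod_cast hlt
      have : g x < g y := lt_of_lt_of_le h1.2 (le_trans this h2.1.le)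
      rw [hxy] at this
      exact lt_irrefl _ this
    have hcard2 : (Finset.Icc m0 m1).card ≤ S.ncard := by
      have := Set.ncard_le_ncard_of_injOn g hmaps2 hinj2 hSfin
      rwa [Set.ncard_coe_finset] at this
    have hm0R : (m0 : ℝ) < (k : ℝ) * a / π + 1 := Nat.ceil_lt_add_one (by positivity)
    have hnR : (k : ℝ) * b / π - 1 < (n : ℝ) := by
      have := Nat.lt_floor_add_one ((k : ℝ) * b / π)
      linarith
    rcases le_or_gt m0 m1 with hcase | hcase
    · have hcardR : ((Finset.Icc m0 m1).card : ℝ) = (m1 : ℝ) - m0 + 1 := by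
        rw [Nat.card_Icc]
        push_cast [Nat.cast_sub (by omega : m0 ≤ m1 + 1)]
        ring
      have hm1R : (m1 : ℝ) = (n : ℝ) - 1 := by
        rw [hm1def]
        push_cast [Nat.cast_sub hn1]
        ring
      have h := hcard2
      have h' : ((Finset.Icc m0 m1).card : ℝ) ≤ (S.ncard : ℝ) := by exact_mod_cast h
      rw [hcardR, hm1R] at h'
      rw [hdiff]
      linarith
    · -- empty index range : the bound is trivial
      have hm1R : (m1 : ℝ) ≥ (n : ℝ) - 1 := by
        rw [hm1def]
        push_cast [Nat.cast_sub hn1]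
        linarith
      have : (m1 : ℝ) + 1 ≤ (m0 : ℝ) := by exact_mod_cast hcase
      have htriv : (k : ℝ) * (b - a) / π ≤ 3 := by
        rw [hdiff]; linarith
      have : (0 : ℝ) ≤ (S.ncard : ℝ) := Nat.cast_nonneg _
      linarith
lemma pFun_zero_iff (k : ℕ) (φ : ℝ) :
    pFun k (1 + Complex.exp (φ * Complex.I)) = 0 ↔ hh k φ = 0 := by
  rw [pFun_eq_hh]
  constructor
  · intro h
    rcases mul_eq_zero.1 h with h | h
    · exact absurd h (Complex.exp_ne_zero _)
    · exact_mod_cast h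
  · intro h
    rw [h]
    simp

lemma tendsto_div_floor3 : Tendsto (fun k : ℕ => (k : ℝ) / ((k / 3 : ℕ) : ℝ))
    atTop (nhds 3) := by
  have hq : Tendsto (fun k : ℕ => (((k / 3 : ℕ) : ℝ)) / (k : ℝ)) atTop (nhds (1/3)) := by
    apply tendsto_of_tendsto_of_tendsto_of_le_of_le'
      (g := fun k : ℕ => 1/3 - (2/3) / (k : ℝ)) (h := fun _ : ℕ => (1/3 : ℝ))
    · have h0 : Tendsto (fun k : ℕ => (2/3 : ℝ) / (k : ℝ)) atTop (nhds 0) :=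
        tendsto_const_div_atTop_nhds_zero_nat (2/3)
      have := (tendsto_const_nhds (x := (1/3 : ℝ)) (f := atTop (α := ℕ))).sub h0
      simpa using this
    · exact tendsto_const_nhds
    · filter_upwards [eventually_ge_atTop 1] with k hk
      have hk0 : (0 : ℝ) < k := by positivity
      have hdm : 3 * (k / 3 : ℕ) + k % 3 = k := Nat.div_add_mod k 3
      have hmod : k % 3 ≤ 2 := by omega
      have hF : (k : ℝ) - 2 ≤ 3 * ((k / 3 : ℕ) : ℝ) := by
        have : k ≤ 3 * (k / 3) + 2 := by omega
        have := (Nat.cast_le (α := ℝ)).2 this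
        push_cast at this
        linarith
      rw [sub_le_iff_le_add, div_add_div _ _ (ne_of_gt hk0) (ne_of_gt hk0),
        div_le_div_iff₀ (by positivity) (by positivity)]
      nlinarith
    · filter_upwards [eventually_ge_atTop 1] with k hk
      have hk0 : (0 : ℝ) < k := by positivity
      have hF : 3 * ((k / 3 : ℕ) : ℝ) ≤ (k : ℝ) := by
        have : 3 * (k / 3) ≤ k := by omega
        exact_mod_cast this
      rw [div_le_div_iff₀ hk0 (by norm_num)]
      linarith
  have hinv := hq.inv₀ (by norm_num)
  have : ((1/3 : ℝ))⁻¹ = 3 := by norm_num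
  rw [this] at hinv
  apply hinv.congr'
  filter_upwards [] with k
  rw [inv_div]

lemma tendsto_aux (d c : ℝ) (hd : 0 ≤ d) :
    Tendsto (fun k : ℕ => ((k : ℝ) * d + c) / ((k / 3 : ℕ) : ℝ)) atTop (nhds (3 * d)) := by
  have h1 : Tendsto (fun k : ℕ => d + c / (k : ℝ)) atTop (nhds d) := by
    have h0 : Tendsto (fun k : ℕ => c / (k : ℝ)) atTop (nhds 0) :=
      tendsto_const_div_atTop_nhds_zero_nat c
    have := (tendsto_const_nhds (x := d) (f := atTop (α := ℕ))).add h0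
    simpa using this
  have h2 := h1.mul tendsto_div_floor3
  have : d * 3 = 3 * d := by ring
  rw [this] at h2
  apply h2.congr'
  filter_upwards [eventually_ge_atTop 3] with k hk
  have hk0 : (0 : ℝ) < k := by positivity
  have hF1 : 1 ≤ k / 3 := by omega
  have hF0 : (0 : ℝ) < ((k / 3 : ℕ) : ℝ) := by exact_mod_cast Nat.lt_of_lt_of_le Nat.zero_lt_one hF1
  field_simp

theorem stmt8 (a b : ℝ) (ha : 2 * Real.pi / 3 ≤ a) (hab : a ≤ b) (hb : b ≤ Real.pi) :
    Filter.Tendsto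
      (fun k : ℕ =>
        (({φ : ℝ | φ ∈ Set.Icc a b ∧
            pFun k (1 + Complex.exp (φ * Complex.I)) = 0}.ncard : ℝ) / ((k / 3 : ℕ) : ℝ)))
      Filter.atTop (nhds (3 * (b - a) / Real.pi)) := by
  have hpi := Real.pi_pos
  have hset : ∀ k : ℕ, {φ : ℝ | φ ∈ Set.Icc a b ∧
      pFun k (1 + Complex.exp (φ * Complex.I)) = 0}
      = {φ : ℝ | φ ∈ Icc a b ∧ hh k φ = 0} := by
    intro k
    ext φ
    simp only [mem_setOf_eq, and_congr_right_iff]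
    intro _
    exact pFun_zero_iff k φ
  simp only [hset]
  have hd : 0 ≤ (b - a) / π := by
    apply div_nonneg _ hpi.le
    linarith
  have htarget : 3 * (b - a) / Real.pi = 3 * ((b - a) / π) := by ring
  rw [htarget]
  apply tendsto_of_tendsto_of_tendsto_of_le_of_le'
    (g := fun k : ℕ => ((k : ℝ) * ((b - a) / π) + (-3)) / ((k / 3 : ℕ) : ℝ))
    (h := fun k : ℕ => ((k : ℝ) * ((b - a) / π) + 3) / ((k / 3 : ℕ) : ℝ))
  · exact tendsto_aux _ _ hd
  · exact tendsto_aux _ _ hd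
  · filter_upwards [eventually_ge_atTop 4] with k hk
    obtain ⟨hfin, hup, hlo⟩ := counting ha hab hb hk
    have hF1 : 1 ≤ k / 3 := by omega
    have hF0 : (0 : ℝ) < ((k / 3 : ℕ) : ℝ) := by
      exact_mod_cast Nat.lt_of_lt_of_le Nat.zero_lt_one hF1
    have e : (k : ℝ) * ((b - a) / π) = (k : ℝ) * (b - a) / π := by ring
    rw [div_le_div_iff_of_pos_right hF0, e]
    linarith
  · filter_upwards [eventually_ge_atTop 4] with k hk
    obtain ⟨hfin, hup, hlo⟩ := counting ha hab hb hk
    have hF1 : 1 ≤ k / 3 := by omega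
    have hF0 : (0 : ℝ) < ((k / 3 : ℕ) : ℝ) := by
      exact_mod_cast Nat.lt_of_lt_of_le Nat.zero_lt_one hF1
    have e : (k : ℝ) * ((b - a) / π) = (k : ℝ) * (b - a) / π := by ring
    rw [div_le_div_iff_of_pos_right hF0, e]
    linarith
end

section
/- There exist constants C > 0 and Y > 0 such that for all real y ≥ Y, |Im(λ(1/2 + iy)) − 16·e^{−πy}| ≤ C·e^{−3πy}. -/
open scoped Real

/-- The modular lambda function. -/
noncomputable def modularLambda (τ : ℂ) : ℂ := theta2 τ ^ 4 / theta3 τ ^ 4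

namespace Stmt14Aux

open Complex

noncomputable def Sf (y : ℝ) (n : ℤ) : ℝ :=
  (-1 : ℝ) ^ (n * (n + 1) / 2) * Real.exp (-(Real.pi * y) * ((n : ℝ) + 1 / 2) ^ 2)

noncomputable def af (y : ℝ) (n : ℤ) : ℝ :=
  if Even n then Real.exp (-(Real.pi * y) * (n : ℝ) ^ 2) else 0

noncomputable def bf (y : ℝ) (n : ℤ) : ℝ :=
  if Even n then 0 else Real.exp (-(Real.pi * y) * (n : ℝ) ^ 2)

noncomputable def Sv (y : ℝ) : ℝ := ∑' n : ℤ, Sf y n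
noncomputable def Av (y : ℝ) : ℝ := ∑' n : ℤ, af y n
noncomputable def Bv (y : ℝ) : ℝ := ∑' n : ℤ, bf y n

lemma eps_abs (m : ℤ) : |(-1 : ℝ) ^ m| = 1 := by
  rcases Int.even_or_odd m with h | h
  · rw [h.neg_one_zpow, abs_one]
  · rw [h.neg_one_zpow, abs_neg, abs_one]

lemma two_mul_half (n : ℤ) : 2 * (n * (n + 1) / 2) = n ^ 2 + n := by
  rw [Int.two_mul_ediv_two_of_even (Int.even_mul_succ_self n)]; ring

lemma exp_pi_I_div_two : Complex.exp (Real.pi * I / 2) = I := by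
  rw [show (Real.pi * I / 2 : ℂ) = ((Real.pi/2 : ℝ) : ℂ) * I by push_cast; ring,
    Complex.exp_mul_I, ← Complex.ofReal_cos, ← Complex.ofReal_sin]
  simp

lemma theta2_term (y : ℝ) (n : ℤ) :
    Complex.exp (Real.pi * I * (1 / 2 + y * I) * ((n : ℂ) + 1 / 2) ^ 2) =
      Complex.exp (Real.pi * I / 8) * ((Sf y n : ℝ) : ℂ) := by
  have hm : 2 * ((n * (n + 1) / 2 : ℤ) : ℂ) = (n : ℂ) ^ 2 + (n : ℂ) := by
    have := congrArg (fun m : ℤ => (m : ℂ)) (two_mul_half n)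
    push_cast at this
    linear_combination this
  rw [show (Real.pi * I * (1 / 2 + y * I) * ((n : ℂ) + 1 / 2) ^ 2 : ℂ) =
      (((n * (n + 1) / 2 : ℤ) : ℂ) * (Real.pi * I) + Real.pi * I / 8) +
        ((-(Real.pi * y) * ((n : ℝ) + 1 / 2) ^ 2 : ℝ) : ℂ) from by
    push_cast
    linear_combination (Real.pi * y * ((n : ℂ) + 1 / 2) ^ 2) * Complex.I_sq -
      (Real.pi * I / 2) * hm]
  rw [Complex.exp_add, Complex.exp_add, Complex.exp_int_mul, Complex.exp_pi_mul_I,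
    ← Complex.ofReal_exp]
  unfold Sf
  push_cast
  ring

lemma theta3_term (y : ℝ) (n : ℤ) :
    Complex.exp (Real.pi * I * (1 / 2 + y * I) * (n : ℂ) ^ 2) =
      ((af y n : ℝ) : ℂ) + ((bf y n : ℝ) : ℂ) * I := by
  by_cases h : Even n
  · obtain ⟨k, hk⟩ := id h
    rw [show (Real.pi * I * (1 / 2 + y * I) * (n : ℂ) ^ 2 : ℂ) =
        ((k ^ 2 : ℤ) : ℂ) * (2 * Real.pi * I) + ((-(Real.pi * y) * (n : ℝ) ^ 2 : ℝ) : ℂ) from by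
      push_cast [hk]
      linear_combination (Real.pi * y * ((k : ℂ) + k) ^ 2) * Complex.I_sq,
      Complex.exp_add, Complex.exp_int_mul_two_pi_mul_I, ← Complex.ofReal_exp]
    simp [af, bf, h]
  · obtain ⟨k, hk⟩ := Int.not_even_iff_odd.1 h
    rw [show (Real.pi * I * (1 / 2 + y * I) * (n : ℂ) ^ 2 : ℂ) =
        (((k ^ 2 + k : ℤ) : ℂ) * (2 * Real.pi * I) + Real.pi * I / 2) +
          ((-(Real.pi * y) * (n : ℝ) ^ 2 : ℝ) : ℂ) from by
      push_cast [hk]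
      linear_combination (Real.pi * y * (2 * (k : ℂ) + 1) ^ 2) * Complex.I_sq,
      Complex.exp_add, Complex.exp_add, Complex.exp_int_mul_two_pi_mul_I, exp_pi_I_div_two,
      ← Complex.ofReal_exp]
    simp [af, bf, h]
    ring

-- symmetry lemmas
lemma Sf_neg (y : ℝ) (n : ℤ) : Sf y (-(n + 1)) = Sf y n := by
  unfold Sf
  rw [show -(n + 1) * (-(n + 1) + 1) = n * (n + 1) from by ring,
    show ((-(n + 1) : ℤ) : ℝ) + 1 / 2 = -(((n : ℤ) : ℝ) + 1 / 2) from by push_cast; ring,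
    neg_sq]

lemma af_neg (y : ℝ) (n : ℤ) : af y (-(n + 1)) = af y (n + 1) := by
  unfold af
  rw [show ((-(n + 1) : ℤ) : ℝ) = -(((n + 1 : ℤ) : ℝ)) from by push_cast; ring, neg_sq]
  simp only [even_neg]

lemma bf_neg (y : ℝ) (n : ℤ) : bf y (-(n + 1)) = bf y (n + 1) := by
  unfold bf
  rw [show ((-(n + 1) : ℤ) : ℝ) = -(((n + 1 : ℤ) : ℝ)) from by push_cast; ring, neg_sq]
  simp only [even_neg]

-- generic geometric comparison helpers
lemma summable_of_le_geom {f : ℕ → ℝ} {r K : ℝ} (hr0 : 0 ≤ r) (hr1 : r < 1)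
    (h : ∀ n, |f n| ≤ K * r ^ n) : Summable f := by
  have : Summable fun n : ℕ => K * r ^ n :=
    (summable_geometric_of_lt_one hr0 hr1).mul_left K
  exact Summable.of_abs (this.of_nonneg_of_le (fun n => abs_nonneg _) h)

lemma abs_tsum_le_geom {f : ℕ → ℝ} {r K : ℝ} (hr0 : 0 ≤ r) (hr1 : r < 1)
    (h : ∀ n, |f n| ≤ K * r ^ n) : |∑' n, f n| ≤ K / (1 - r) := by
  have hgeom : Summable fun n : ℕ => K * r ^ n :=
    (summable_geometric_of_lt_one hr0 hr1).mul_left K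
  have habs : Summable fun n : ℕ => |f n| :=
    hgeom.of_nonneg_of_le (fun n => abs_nonneg _) h
  calc |∑' n, f n| ≤ ∑' n, |f n| := by
        simpa using norm_tsum_le_tsum_norm (f := f) (by simpa using habs)
    _ ≤ ∑' n : ℕ, K * r ^ n := Summable.tsum_le_tsum h habs hgeom
    _ = K / (1 - r) := by
        rw [tsum_mul_left, tsum_geometric_of_lt_one hr0 hr1, div_eq_mul_inv]


lemma exp_pow (x : ℝ) (k : ℕ) : Real.exp x ^ k = Real.exp (k * x) := (Real.exp_nat_mul x k).symm

section Estimates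

variable {y : ℝ}

lemma piy_pos (hy : 1 ≤ y) : 0 < Real.pi * y := by nlinarith [Real.pi_pos]

lemma t_small (hy : 1 ≤ y) : Real.exp (-(Real.pi * y)) ≤ 1 / 20 := by
  have hpi := Real.pi_gt_three
  have h1 : Real.exp (-(Real.pi * y)) ≤ Real.exp (-3) := Real.exp_le_exp.2 (by nlinarith)
  have he : (2.7182818283 : ℝ) < Real.exp 1 := Real.exp_one_gt_d9
  have h20 : (20 : ℝ) < Real.exp 3 := by
    have h3 : Real.exp 3 = Real.exp 1 ^ 3 := by rw [exp_pow]; norm_num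
    rw [h3]
    calc (20:ℝ) < 2.7182818283 ^ 3 := by norm_num
      _ < Real.exp 1 ^ 3 := pow_lt_pow_left₀ he (by norm_num) (by norm_num)
  have : Real.exp (-3) = (Real.exp 3)⁻¹ := by rw [← Real.exp_neg]
  rw [this] at h1
  calc Real.exp (-(Real.pi*y)) ≤ (Real.exp 3)⁻¹ := h1
    _ ≤ 1/20 := by rw [one_div]; exact inv_anti₀ (by norm_num) h20.le

lemma t_lt_one (hy : 1 ≤ y) : Real.exp (-(Real.pi * y)) < 1 :=
  Real.exp_lt_one_iff.2 (by nlinarith [piy_pos hy])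

-- pointwise bounds
lemma Sf_nat_bound (hy : 1 ≤ y) (n : ℕ) :
    |Sf y n| ≤ 1 * Real.exp (-(Real.pi * y)) ^ n := by
  unfold Sf
  rw [abs_mul, eps_abs, one_mul, Real.abs_exp, one_mul, exp_pow]
  apply Real.exp_le_exp.2
  have h := piy_pos hy
  push_cast
  nlinarith [sq_nonneg (n : ℝ)]

lemma Sf_tail_bound (hy : 1 ≤ y) (n : ℕ) :
    |Sf y ((n : ℤ) + 1)| ≤
      (Real.exp (-(Real.pi * y) / 4) * Real.exp (-(Real.pi * y)) ^ 2) *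
        (Real.exp (-(Real.pi * y)) ^ 2) ^ n := by
  unfold Sf
  rw [abs_mul, eps_abs, one_mul, Real.abs_exp, exp_pow, exp_pow, ← Real.exp_add,
    ← Real.exp_add]
  apply Real.exp_le_exp.2
  have h := piy_pos hy
  push_cast
  nlinarith [sq_nonneg (n : ℝ), Nat.cast_nonneg (α := ℝ) n]

lemma af_nat_bound (hy : 1 ≤ y) (n : ℕ) :
    |af y n| ≤ 1 * Real.exp (-(Real.pi * y)) ^ n := by
  unfold af
  have h := piy_pos hy
  rw [one_mul, exp_pow]
  split_ifs with hev
  · rw [Real.abs_exp]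
    apply Real.exp_le_exp.2
    have hn : (n : ℝ) ≤ (n : ℝ) ^ 2 := by
      exact_mod_cast Nat.le_self_pow (by norm_num) n
    push_cast
    nlinarith
  · simpa using (Real.exp_pos _).le

lemma bf_nat_bound (hy : 1 ≤ y) (n : ℕ) :
    |bf y n| ≤ 1 * Real.exp (-(Real.pi * y)) ^ n := by
  unfold bf
  have h := piy_pos hy
  rw [one_mul, exp_pow]
  split_ifs with hev
  · simpa using (Real.exp_pos _).le
  · rw [Real.abs_exp]
    apply Real.exp_le_exp.2
    have hn : (n : ℝ) ≤ (n : ℝ) ^ 2 := by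
      exact_mod_cast Nat.le_self_pow (by norm_num) n
    push_cast
    nlinarith

lemma af_tail_bound (hy : 1 ≤ y) (n : ℕ) :
    |af y ((n : ℤ) + 1)| ≤
      Real.exp (-(Real.pi * y)) ^ 2 * (Real.exp (-(Real.pi * y)) ^ 2) ^ n := by
  unfold af
  have h := piy_pos hy
  rw [exp_pow, exp_pow, ← Real.exp_add]
  split_ifs with hev
  · rcases n with _ | m
    · exact absurd hev (by decide)
    · rw [Real.abs_exp]
      apply Real.exp_le_exp.2
      push_cast
      nlinarith [mul_nonneg h.le (by positivity : (0:ℝ) ≤ (m:ℝ)^2 + 2*(m:ℝ))]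
  · simpa using (Real.exp_pos _).le

lemma bf_tail_bound (hy : 1 ≤ y) (n : ℕ) :
    |bf y ((n : ℤ) + 1)| ≤
      Real.exp (-(Real.pi * y)) * Real.exp (-(Real.pi * y)) ^ n := by
  unfold bf
  have h := piy_pos hy
  rw [exp_pow, ← Real.exp_add]
  split_ifs with hev
  · simpa using (Real.exp_pos _).le
  · rw [Real.abs_exp]
    apply Real.exp_le_exp.2
    push_cast
    nlinarith [sq_nonneg (n : ℝ), Nat.cast_nonneg (α := ℝ) n]

end Estimates


section Sums

variable {y : ℝ}

lemma texp_pos (y : ℝ) : 0 < Real.exp (-(Real.pi * y)) := Real.exp_pos _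

lemma summable_Sf_nat (hy : 1 ≤ y) : Summable fun n : ℕ => Sf y n :=
  summable_of_le_geom (texp_pos y).le (t_lt_one hy) (Sf_nat_bound hy)

lemma summable_Sf (hy : 1 ≤ y) : Summable (Sf y) := by
  refine Summable.of_nat_of_neg_add_one (summable_Sf_nat hy) ?_
  have : (fun n : ℕ => Sf y (-((n : ℤ) + 1))) = fun n : ℕ => Sf y n := by
    funext n; exact Sf_neg y n
  rw [this]
  exact summable_Sf_nat hy

lemma summable_af_nat (hy : 1 ≤ y) : Summable fun n : ℕ => af y n :=
  summable_of_le_geom (texp_pos y).le (t_lt_one hy) (af_nat_bound hy)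

lemma summable_af (hy : 1 ≤ y) : Summable (af y) := by
  refine Summable.of_nat_of_neg_add_one (summable_af_nat hy) ?_
  have : (fun n : ℕ => af y (-((n : ℤ) + 1))) = fun n : ℕ => af y ((n : ℤ) + 1) := by
    funext n; exact af_neg y n
  rw [this]
  apply summable_of_le_geom (texp_pos y).le (t_lt_one hy)
  intro n
  calc |af y ((n : ℤ) + 1)| ≤ _ := af_tail_bound hy n
    _ ≤ 1 * Real.exp (-(Real.pi * y)) ^ n := by
        have ht0 := texp_pos y
        have ht1 := (t_lt_one hy).le
        have h2 : Real.exp (-(Real.pi * y)) ^ 2 ≤ 1 := by nlinarith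
        have h3 : (Real.exp (-(Real.pi * y)) ^ 2) ^ n ≤ Real.exp (-(Real.pi * y)) ^ n := by
          rw [← pow_mul]
          exact pow_le_pow_of_le_one ht0.le ht1 (by omega)
        nlinarith [pow_nonneg (pow_nonneg ht0.le 2) n, pow_nonneg ht0.le n]

lemma summable_bf (hy : 1 ≤ y) : Summable (bf y) := by
  refine Summable.of_nat_of_neg_add_one
    (summable_of_le_geom (texp_pos y).le (t_lt_one hy) (bf_nat_bound hy)) ?_
  have : (fun n : ℕ => bf y (-((n : ℤ) + 1))) = fun n : ℕ => bf y ((n : ℤ) + 1) := by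
    funext n; exact bf_neg y n
  rw [this]
  apply summable_of_le_geom (texp_pos y).le (t_lt_one hy)
  intro n
  calc |bf y ((n : ℤ) + 1)| ≤ _ := bf_tail_bound hy n
    _ ≤ 1 * Real.exp (-(Real.pi * y)) ^ n := by
        nlinarith [pow_nonneg (texp_pos y).le n, (t_lt_one hy).le, texp_pos y,
          pow_nonneg (texp_pos y).le n]

lemma Sf_zero (y : ℝ) : Sf y 0 = Real.exp (-(Real.pi * y) / 4) := by
  unfold Sf
  norm_num
  ring_nf

lemma af_zero (y : ℝ) : af y 0 = 1 := by
  simp [af]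

lemma bf_zero (y : ℝ) : bf y 0 = 0 := by
  simp [bf]

lemma Sv_est (hy : 1 ≤ y) :
    |Sv y - 2 * Real.exp (-(Real.pi * y) / 4)| ≤
      3 * (Real.exp (-(Real.pi * y) / 4) * Real.exp (-(Real.pi * y)) ^ 2) := by
  set t := Real.exp (-(Real.pi * y)) with htdef
  set u := Real.exp (-(Real.pi * y) / 4) with hudef
  have hnat := summable_Sf_nat hy
  have hneg : Summable fun n : ℕ => Sf y (-((n : ℤ) + 1)) := by
    simpa only [Sf_neg] using summable_Sf_nat hy
  have h0 := tsum_of_nat_of_neg_add_one (summable_Sf_nat hy) hneg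
  have h3 : (∑' n : ℕ, Sf y (-((n : ℤ) + 1))) = ∑' n : ℕ, Sf y (n : ℤ) :=
    tsum_congr fun n => Sf_neg y n
  have hSv : Sv y = 2 * ∑' n : ℕ, Sf y n := by
    rw [Sv, h0, h3]; ring
  have hz := Summable.tsum_eq_zero_add hnat
  have hcast : (fun n : ℕ => Sf y ((n : ℕ) + 1 : ℕ)) = fun n : ℕ => Sf y ((n : ℤ) + 1) := by
    funext n; norm_cast
  have htail : |∑' n : ℕ, Sf y ((n : ℤ) + 1)| ≤ (u * t ^ 2) / (1 - t ^ 2) :=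
    abs_tsum_le_geom (by positivity) (by nlinarith [t_lt_one hy, texp_pos y])
      (Sf_tail_bound hy)
  have ht20 := t_small hy
  have ht0 := texp_pos y
  have hu0 : 0 < u := Real.exp_pos _
  have h00 : Sf y ((0 : ℕ) : ℤ) = u := by
    rw [show ((0 : ℕ) : ℤ) = 0 by norm_num, Sf_zero]
  have h1 : Sv y - 2 * u = 2 * ∑' n : ℕ, Sf y ((n : ℤ) + 1) := by
    rw [hSv, hz, h00, hcast]
    ring
  have ht20' : t ≤ 1 / 20 := ht20
  have ht0' : 0 < t := ht0
  rw [h1, abs_mul, (by norm_num : |(2:ℝ)| = 2)]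
  have h2 : (u * t ^ 2) / (1 - t ^ 2) ≤ (3 / 2) * (u * t ^ 2) := by
    rw [div_le_iff₀ (by nlinarith)]
    nlinarith [mul_nonneg (mul_nonneg hu0.le (sq_nonneg t)) (by nlinarith : (0:ℝ) ≤ 1/3 - t^2)]
  nlinarith [htail]

lemma Av_est (hy : 1 ≤ y) :
    1 ≤ Av y ∧ Av y ≤ 1 + 3 * Real.exp (-(Real.pi * y)) ^ 2 := by
  set t := Real.exp (-(Real.pi * y)) with htdef
  have hnat := summable_af_nat hy
  have hcast : (fun n : ℕ => af y ((n : ℕ) + 1 : ℕ)) = fun n : ℕ => af y ((n : ℤ) + 1) := by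
    funext n; norm_cast
  have htails : Summable fun n : ℕ => af y ((n : ℤ) + 1) := by
    rw [← hcast]
    exact_mod_cast (summable_nat_add_iff 1).2 hnat
  have hneg : Summable fun n : ℕ => af y (-((n : ℤ) + 1)) := by
    simpa only [af_neg] using htails
  have h0 := tsum_of_nat_of_neg_add_one (summable_af_nat hy) hneg
  have h3 : (∑' n : ℕ, af y (-((n : ℤ) + 1))) = ∑' n : ℕ, af y ((n : ℤ) + 1) :=
    tsum_congr fun n => af_neg y n
  have h00 : af y ((0 : ℕ) : ℤ) = 1 := by
    rw [show ((0 : ℕ) : ℤ) = 0 by norm_num, af_zero]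
  have hAv : Av y = 1 + 2 * ∑' n : ℕ, af y ((n : ℤ) + 1) := by
    rw [Av, h0, h3, Summable.tsum_eq_zero_add hnat, h00, hcast]
    ring
  have htail : |∑' n : ℕ, af y ((n : ℤ) + 1)| ≤ t ^ 2 / (1 - t ^ 2) := by
    have := abs_tsum_le_geom (r := t ^ 2) (K := t ^ 2) (by positivity)
      (by nlinarith [t_lt_one hy, texp_pos y]) (af_tail_bound hy)
    simpa using this
  have hnn : 0 ≤ ∑' n : ℕ, af y ((n : ℤ) + 1) :=
    tsum_nonneg fun n => by unfold af; split_ifs <;> positivity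
  have ht20 := t_small hy
  have ht0 := texp_pos y
  have ht20' : t ≤ 1 / 20 := ht20
  have ht0' : 0 < t := ht0
  constructor
  · rw [hAv]; nlinarith
  · rw [hAv]
    have h2 : t ^ 2 / (1 - t ^ 2) ≤ (3 / 2) * t ^ 2 := by
      rw [div_le_iff₀ (by nlinarith)]
      nlinarith [mul_nonneg (sq_nonneg t) (by nlinarith : (0:ℝ) ≤ 1/3 - t^2)]
    nlinarith [abs_le.1 htail]

lemma Bv_est (hy : 1 ≤ y) :
    0 ≤ Bv y ∧ Bv y ≤ 3 * Real.exp (-(Real.pi * y)) := by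
  set t := Real.exp (-(Real.pi * y)) with htdef
  have hnat : Summable fun n : ℕ => bf y n :=
    summable_of_le_geom (texp_pos y).le (t_lt_one hy) (bf_nat_bound hy)
  have hcast : (fun n : ℕ => bf y ((n : ℕ) + 1 : ℕ)) = fun n : ℕ => bf y ((n : ℤ) + 1) := by
    funext n; norm_cast
  have htails : Summable fun n : ℕ => bf y ((n : ℤ) + 1) := by
    rw [← hcast]
    exact_mod_cast (summable_nat_add_iff 1).2 hnat
  have hneg : Summable fun n : ℕ => bf y (-((n : ℤ) + 1)) := by
    simpa only [bf_neg] using htails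
  have h0 := tsum_of_nat_of_neg_add_one hnat hneg
  have h3 : (∑' n : ℕ, bf y (-((n : ℤ) + 1))) = ∑' n : ℕ, bf y ((n : ℤ) + 1) :=
    tsum_congr fun n => bf_neg y n
  have h00 : bf y ((0 : ℕ) : ℤ) = 0 := by
    rw [show ((0 : ℕ) : ℤ) = 0 by norm_num, bf_zero]
  have hBv : Bv y = 2 * ∑' n : ℕ, bf y ((n : ℤ) + 1) := by
    rw [Bv, h0, h3, Summable.tsum_eq_zero_add hnat, h00, hcast]
    ring
  have htail : |∑' n : ℕ, bf y ((n : ℤ) + 1)| ≤ t / (1 - t) :=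
    abs_tsum_le_geom (texp_pos y).le (t_lt_one hy) (bf_tail_bound hy)
  have hnn : 0 ≤ ∑' n : ℕ, bf y ((n : ℤ) + 1) :=
    tsum_nonneg fun n => by unfold bf; split_ifs <;> positivity
  have ht20 := t_small hy
  have ht0 := texp_pos y
  have ht20' : t ≤ 1 / 20 := ht20
  have ht0' : 0 < t := ht0
  constructor
  · rw [hBv]; nlinarith
  · rw [hBv]
    have h2 : t / (1 - t) ≤ (3 / 2) * t := by
      rw [div_le_iff₀ (by nlinarith)]
      nlinarith [mul_nonneg ht0'.le (by nlinarith : (0:ℝ) ≤ 1/3 - t)]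
    nlinarith [abs_le.1 htail]

end Sums


section Identities

variable {y : ℝ}

lemma theta2_eq (hy : 1 ≤ y) :
    theta2 (1 / 2 + y * I) = Complex.exp (Real.pi * I / 8) * ((Sv y : ℝ) : ℂ) := by
  rw [theta2]
  rw [tsum_congr (theta2_term y)]
  rw [tsum_mul_left]
  rw [Sv, Complex.ofReal_tsum]

lemma theta3_eq (hy : 1 ≤ y) :
    theta3 (1 / 2 + y * I) = ((Av y : ℝ) : ℂ) + ((Bv y : ℝ) : ℂ) * I := by
  rw [theta3]
  rw [tsum_congr (theta3_term y)]
  have hsa : Summable fun n : ℤ => ((af y n : ℝ) : ℂ) :=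
    (Complex.summable_ofReal (f := af y)).2 (summable_af hy)
  have hsb : Summable fun n : ℤ => ((bf y n : ℝ) : ℂ) * I :=
    ((Complex.summable_ofReal (f := bf y)).2 (summable_bf hy)).mul_right I
  rw [Summable.tsum_add hsa hsb, tsum_mul_right]
  rw [Av, Bv, Complex.ofReal_tsum, Complex.ofReal_tsum]

lemma lambda_im (hy : 1 ≤ y) :
    (modularLambda (1 / 2 + y * I)).im =
      Sv y ^ 4 * (Av y ^ 4 - 6 * Av y ^ 2 * Bv y ^ 2 + Bv y ^ 4) /
        (Av y ^ 2 + Bv y ^ 2) ^ 4 := by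
  rw [modularLambda, theta2_eq hy, theta3_eq hy]
  set S := Sv y
  set A := Av y
  set B := Bv y
  have h2 : (Complex.exp (Real.pi * I / 8) * ((S : ℝ) : ℂ)) ^ 4 = I * ((S : ℝ) : ℂ) ^ 4 := by
    rw [mul_pow, ← Complex.exp_nat_mul,
      show ((4 : ℕ) : ℂ) * (Real.pi * I / 8) = Real.pi * I / 2 by push_cast; ring,
      exp_pi_I_div_two]
  rw [h2]
  have hre : ((((A : ℝ) : ℂ) + ((B : ℝ) : ℂ) * I) ^ 4).re =
      A ^ 4 - 6 * A ^ 2 * B ^ 2 + B ^ 4 := by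
    simp [pow_succ, Complex.mul_re, Complex.mul_im]
    ring
  have hns : Complex.normSq ((((A : ℝ) : ℂ) + ((B : ℝ) : ℂ) * I) ^ 4) =
      (A ^ 2 + B ^ 2) ^ 4 := by
    rw [map_pow, Complex.normSq_add_mul_I]
  have hzre : (I * ((S : ℝ) : ℂ) ^ 4).re = 0 := by simp [← Complex.ofReal_pow]
  have hzim : (I * ((S : ℝ) : ℂ) ^ 4).im = S ^ 4 := by
    simp [← Complex.ofReal_pow]
  rw [Complex.div_im, hre, hns, hzre, hzim]
  ring

end Identities


lemma abs_pow4_sub (a b M : ℝ) (ha : |a| ≤ M) (hb : |b| ≤ M) :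
    |a ^ 4 - b ^ 4| ≤ |a - b| * (4 * M ^ 3) := by
  have h : a ^ 4 - b ^ 4 = (a - b) * (a ^ 3 + a ^ 2 * b + a * b ^ 2 + b ^ 3) := by ring
  rw [h, abs_mul]
  have hM : 0 ≤ M := le_trans (abs_nonneg a) ha
  have h1 : |a ^ 3 + a ^ 2 * b + a * b ^ 2 + b ^ 3| ≤ 4 * M ^ 3 := by
    have h2 := abs_add_le (a ^ 3 + a ^ 2 * b + a * b ^ 2) (b ^ 3)
    have h3 := abs_add_le (a ^ 3 + a ^ 2 * b) (a * b ^ 2)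
    have h4 := abs_add_le (a ^ 3) (a ^ 2 * b)
    have e1 : |a ^ 3| = |a| ^ 3 := by rw [_root_.abs_pow]
    have e2 : |a ^ 2 * b| = |a| ^ 2 * |b| := by rw [abs_mul, _root_.abs_pow]
    have e3 : |a * b ^ 2| = |a| * |b| ^ 2 := by rw [abs_mul, _root_.abs_pow]
    have e4 : |b ^ 3| = |b| ^ 3 := by rw [_root_.abs_pow]
    have p1 : |a| ^ 3 ≤ M ^ 3 := pow_le_pow_left₀ (abs_nonneg a) ha 3
    have p2 : |a| ^ 2 * |b| ≤ M ^ 2 * M :=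
      mul_le_mul (pow_le_pow_left₀ (abs_nonneg a) ha 2) hb (abs_nonneg b) (by positivity)
    have p3 : |a| * |b| ^ 2 ≤ M * M ^ 2 :=
      mul_le_mul ha (pow_le_pow_left₀ (abs_nonneg b) hb 2) (by positivity) hM
    have p4 : |b| ^ 3 ≤ M ^ 3 := pow_le_pow_left₀ (abs_nonneg b) hb 3
    nlinarith
  exact mul_le_mul_of_nonneg_left h1 (abs_nonneg _)

end Stmt14Aux

set_option maxHeartbeats 2000000 in
theorem stmt14 :
    ∃ C > (0 : ℝ), ∃ Y > (0 : ℝ),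
      ∀ y : ℝ, Y ≤ y →
        |(modularLambda (1 / 2 + y * Complex.I)).im - 16 * Real.exp (-(Real.pi * y))| ≤
          C * Real.exp (-(3 * Real.pi * y)) := by
  refine ⟨8000, by norm_num, 1, one_pos, fun y hy => ?_⟩
  open Stmt14Aux in
  have him := Stmt14Aux.lambda_im hy
  have hSc := Stmt14Aux.Sv_est hy
  obtain ⟨hA1, hA2⟩ := Stmt14Aux.Av_est hy
  obtain ⟨hB1, hB2⟩ := Stmt14Aux.Bv_est hy
  have ht0 : 0 < Real.exp (-(Real.pi * y)) := Real.exp_pos _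
  have ht20 := Stmt14Aux.t_small hy
  have hu0 : 0 < Real.exp (-(Real.pi * y) / 4) := Real.exp_pos _
  set t := Real.exp (-(Real.pi * y)) with htdef
  set u := Real.exp (-(Real.pi * y) / 4) with hudef
  set S := Stmt14Aux.Sv y with hSdef
  set A := Stmt14Aux.Av y with hAdef
  set B := Stmt14Aux.Bv y with hBdef
  have hu4 : u ^ 4 = t := by
    rw [hudef, htdef, Stmt14Aux.exp_pow]
    congr 1
    push_cast
    ring
  have hgoalrhs : Real.exp (-(3 * Real.pi * y)) = t ^ 3 := by
    rw [htdef, Stmt14Aux.exp_pow]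
    congr 1
    push_cast
    ring
  rw [him, hgoalrhs]
  clear him
  -- numeric facts
  have ht20' : t ≤ 1 / 20 := ht20
  have ht0' : 0 < t := ht0
  have htsq : t ^ 2 ≤ 1 / 400 := by nlinarith
  -- |S| ≤ 3u
  have hSc' := abs_le.1 hSc
  have hSabs : |S| ≤ 3 * u := by
    rw [abs_le]
    constructor <;> nlinarith [hSc'.1, hSc'.2]
  -- |S^4 - 16 t| ≤ 324 t^3
  have h2uabs : |2 * u| ≤ 3 * u := by rw [abs_of_nonneg (by positivity)]; nlinarith
  have hpow4 := Stmt14Aux.abs_pow4_sub S (2 * u) (3 * u) hSabs h2uabs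
  have h16t : (2 * u) ^ 4 = 16 * t := by rw [← hu4]; ring
  have hS4 : |S ^ 4 - 16 * t| ≤ 324 * t ^ 3 := by
    rw [← h16t]
    calc |S ^ 4 - (2 * u) ^ 4| ≤ |S - 2 * u| * (4 * (3 * u) ^ 3) := hpow4
      _ ≤ (3 * (u * t ^ 2)) * (4 * (3 * u) ^ 3) := by
          have : (0:ℝ) ≤ 4 * (3 * u) ^ 3 := by positivity
          exact mul_le_mul_of_nonneg_right hSc this
      _ = 324 * (u ^ 4 * t ^ 2) := by ring
      _ = 324 * t ^ 3 := by rw [hu4]; ring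
  -- A, B power bounds
  have hA2sq : A ^ 2 ≤ 1 + 7 * t ^ 2 := by
    nlinarith [pow_le_pow_left₀ (by linarith : (0:ℝ) ≤ A) hA2 2]
  have hA2sq1 : 1 ≤ A ^ 2 := by nlinarith
  have hA4 : A ^ 4 ≤ 1 + 15 * t ^ 2 := by
    nlinarith [pow_le_pow_left₀ (by positivity : (0:ℝ) ≤ A ^ 2) hA2sq 2]
  have hA41 : 1 ≤ A ^ 4 := by nlinarith [pow_le_pow_left₀ (by norm_num : (0:ℝ) ≤ 1) hA2sq1 2]
  have hB2sq : B ^ 2 ≤ 9 * t ^ 2 := by nlinarith [pow_le_pow_left₀ hB1 hB2 2]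
  have hB4 : B ^ 4 ≤ 81 * t ^ 4 := by nlinarith [pow_le_pow_left₀ hB1 hB2 4]
  have hA2B2 : A ^ 2 * B ^ 2 ≤ (1 + 7 * t ^ 2) * (9 * t ^ 2) :=
    mul_le_mul hA2sq hB2sq (sq_nonneg B) (by positivity)
  set N := A ^ 4 - 6 * A ^ 2 * B ^ 2 + B ^ 4 with hNdef
  set D := (A ^ 2 + B ^ 2) ^ 4 with hDdef
  have hN1 : |N - 1| ≤ 60 * t ^ 2 := by
    rw [abs_le]
    constructor <;> nlinarith [sq_nonneg B, sq_nonneg A, mul_nonneg (sq_nonneg A) (sq_nonneg B)]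
  have hx1 : 1 ≤ A ^ 2 + B ^ 2 := by nlinarith [sq_nonneg B]
  have hx2 : A ^ 2 + B ^ 2 ≤ 1 + 16 * t ^ 2 := by nlinarith
  have hD1 : 1 ≤ D := by rw [hDdef]; exact one_le_pow₀ hx1
  have hD2 : D ≤ 1 + 100 * t ^ 2 := by
    have hxx : (A ^ 2 + B ^ 2) ^ 2 ≤ 1 + 33 * t ^ 2 := by
      nlinarith [pow_le_pow_left₀ (by positivity : (0:ℝ) ≤ A ^ 2 + B ^ 2) hx2 2]
    have hxx1 : 1 ≤ (A ^ 2 + B ^ 2) ^ 2 := one_le_pow₀ hx1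
    have hDsq : D = ((A ^ 2 + B ^ 2) ^ 2) ^ 2 := by rw [hDdef]; ring
    rw [hDsq]
    nlinarith [pow_le_pow_left₀ (le_trans zero_le_one hxx1) hxx 2]
  have hND : |N - D| ≤ 160 * t ^ 2 := by
    rw [abs_le] at hN1 ⊢
    constructor <;> nlinarith [hN1.1, hN1.2]
  have hNabs : |N| ≤ 2 := by
    rw [abs_le] at hN1 ⊢
    constructor <;> nlinarith [hN1.1, hN1.2]
  -- the key bound
  have hkey : |S ^ 4 * N - 16 * t * D| ≤ 4000 * t ^ 3 := by
    calc |S ^ 4 * N - 16 * t * D|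
        = |(S ^ 4 - 16 * t) * N + 16 * t * (N - D)| := by rw [show S ^ 4 * N - 16 * t * D =
            (S ^ 4 - 16 * t) * N + 16 * t * (N - D) from by ring]
      _ ≤ |(S ^ 4 - 16 * t) * N| + |16 * t * (N - D)| := abs_add_le _ _
      _ = |S ^ 4 - 16 * t| * |N| + (16 * t) * |N - D| := by
          rw [abs_mul, abs_mul, abs_of_nonneg (by positivity : (0:ℝ) ≤ 16 * t)]
      _ ≤ (324 * t ^ 3) * 2 + (16 * t) * (160 * t ^ 2) := by
          have g1 : |S ^ 4 - 16 * t| * |N| ≤ (324 * t ^ 3) * 2 :=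
            mul_le_mul hS4 hNabs (abs_nonneg _) (by positivity)
          have g2 : (16 * t) * |N - D| ≤ (16 * t) * (160 * t ^ 2) :=
            mul_le_mul_of_nonneg_left hND (by positivity)
          linarith
      _ ≤ 4000 * t ^ 3 := by nlinarith
  have hD0 : (0:ℝ) < D := by linarith
  have hsplit : S ^ 4 * N / D - 16 * t = (S ^ 4 * N - 16 * t * D) / D := by
    field_simp
  rw [hsplit, abs_div, abs_of_pos hD0]
  calc |S ^ 4 * N - 16 * t * D| / D ≤ |S ^ 4 * N - 16 * t * D| :=
        div_le_self (abs_nonneg _) hD1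
    _ ≤ 8000 * t ^ 3 := by nlinarith [hkey, pow_nonneg ht0'.le 3]
end

section
/- Let k ≥ 1 be an integer and ρ = e^{iπ/3}. Then p_{2k}(ρ) = 1 + 2·cos(2πk/3) and p_{2k}′(ρ) = 4ik·sin(2πk/3 − π/3). Consequently: if k ≡ 0 (mod 3) then p_{2k}(ρ) = 3 ≠ 0; if k ≡ 1 (mod 3) then p_{2k}(ρ) = 0 and p_{2k}′(ρ) ≠ 0; and if k ≡ 2 (mod 3) then p_{2k}(ρ) = 0 and p_{2k}′(ρ) = 0. -/
open scoped Real

theorem stmt17 (k : ℕ) (hk : 1 ≤ k)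
    (ρ : ℂ) (hρ : ρ = Complex.exp (Real.pi / 3 * Complex.I)) :
    pFun k ρ = 1 + 2 * Real.cos (2 * Real.pi * k / 3) ∧
    deriv (pFun k) ρ =
      4 * Complex.I * (k : ℂ) * Real.sin (2 * Real.pi * k / 3 - Real.pi / 3) ∧
    (k % 3 = 0 → pFun k ρ = 3 ∧ pFun k ρ ≠ 0) ∧
    (k % 3 = 1 → pFun k ρ = 0 ∧ deriv (pFun k) ρ ≠ 0) ∧
    (k % 3 = 2 → pFun k ρ = 0 ∧ deriv (pFun k) ρ = 0) := by
  have hkc : (k : ℂ) ≠ 0 := Nat.cast_ne_zero.mpr (by omega)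
  set θ : ℝ := 2 * Real.pi * (k : ℝ) / 3 with hθ
  set φ : ℝ := 2 * Real.pi * (k : ℝ) / 3 - Real.pi / 3 with hφ
  -- cos(π/3) = 1/2 in ℂ
  have hc : Complex.cos ((Real.pi : ℂ) / 3) = 1 / 2 := by
    have h1 : ((Real.pi / 3 : ℝ) : ℂ) = (Real.pi : ℂ) / 3 := by push_cast; ring
    rw [← h1, ← Complex.ofReal_cos, Real.cos_pi_div_three]
    norm_num
  have h1mρ : (1 : ℂ) - ρ = Complex.exp (-((Real.pi : ℂ) / 3) * Complex.I) := by
    rw [hρ, Complex.exp_mul_I, Complex.exp_mul_I, Complex.cos_neg, Complex.sin_neg, hc]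
    ring
  -- powers
  have hcast1 : ((2 * k : ℕ) : ℂ) * ((Real.pi : ℂ) / 3 * Complex.I) = (θ : ℂ) * Complex.I := by
    push_cast [hθ]; ring
  have hpow1 : ρ ^ (2 * k) = Complex.exp ((θ : ℂ) * Complex.I) := by
    rw [hρ, ← Complex.exp_nat_mul, hcast1]
  have hpow2 : (1 - ρ) ^ (2 * k) = Complex.exp (-((θ : ℂ) * Complex.I)) := by
    rw [h1mρ, ← Complex.exp_nat_mul]
    congr 1
    push_cast [hθ]; ring
  have hval : pFun k ρ = 1 + 2 * (Real.cos θ : ℂ) := by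
    unfold pFun
    rw [hpow1, hpow2, ← neg_mul, Complex.exp_mul_I, Complex.exp_mul_I, Complex.cos_neg,
      Complex.sin_neg, Complex.ofReal_cos]
    ring
  -- derivative
  have hd : HasDerivAt (pFun k)
      (((2 * k : ℕ) : ℂ) * ρ ^ (2 * k - 1) - ((2 * k : ℕ) : ℂ) * (1 - ρ) ^ (2 * k - 1)) ρ := by
    have h1 : HasDerivAt (fun z : ℂ => z ^ (2 * k)) (((2 * k : ℕ) : ℂ) * ρ ^ (2 * k - 1)) ρ :=
      hasDerivAt_pow _ _
    have ha : HasDerivAt (fun z : ℂ => 1 - z) (-1) ρ := by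
      simpa using (hasDerivAt_id ρ).const_sub (1 : ℂ)
    have h2 := (hasDerivAt_pow (2 * k) ((1 : ℂ) - ρ)).comp ρ ha
    have hD := (h1.const_add (1 : ℂ)).add h2
    simp only [Function.comp_def, Pi.add_def] at hD
    have hD' : HasDerivAt (fun z : ℂ => 1 + z ^ (2 * k) + (1 - z) ^ (2 * k))
        (((2 * k : ℕ) : ℂ) * ρ ^ (2 * k - 1) - ((2 * k : ℕ) : ℂ) * (1 - ρ) ^ (2 * k - 1)) ρ := by
      simpa only [mul_neg_one, ← sub_eq_add_neg] using hD
    exact hD'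
  have hcast2 : ((2 * k - 1 : ℕ) : ℂ) * ((Real.pi : ℂ) / 3 * Complex.I) = (φ : ℂ) * Complex.I := by
    have h2k : ((2 * k - 1 : ℕ) : ℂ) = 2 * (k : ℂ) - 1 := by
      push_cast [Nat.cast_sub (show 1 ≤ 2 * k by omega)]; ring
    rw [h2k]
    push_cast [hφ]; ring
  have hr1 : ρ ^ (2 * k - 1) = Complex.exp ((φ : ℂ) * Complex.I) := by
    rw [hρ, ← Complex.exp_nat_mul, hcast2]
  have hr2 : (1 - ρ) ^ (2 * k - 1) = Complex.exp (-((φ : ℂ) * Complex.I)) := by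
    rw [h1mρ, ← Complex.exp_nat_mul]
    congr 1
    linear_combination -hcast2
  have hder : deriv (pFun k) ρ = 4 * Complex.I * (k : ℂ) * (Real.sin φ : ℂ) := by
    rw [hd.deriv, hr1, hr2, ← neg_mul, Complex.exp_mul_I, Complex.exp_mul_I, Complex.cos_neg,
      Complex.sin_neg, Complex.ofReal_sin]
    push_cast
    ring
  refine ⟨by rw [hval], by rw [hder], ?_, ?_, ?_⟩
  · intro h3
    obtain ⟨m, rfl⟩ : ∃ m, k = 3 * m := ⟨k / 3, by omega⟩
    have hθ' : θ = (m : ℝ) * (2 * Real.pi) := by rw [hθ]; push_cast; ring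
    have : Real.cos θ = 1 := by rw [hθ', Real.cos_nat_mul_two_pi]
    rw [hval, this]
    norm_num
  · intro h3
    obtain ⟨m, rfl⟩ : ∃ m, k = 3 * m + 1 := ⟨k / 3, by omega⟩
    have hθ' : θ = (Real.pi - Real.pi / 3) + (m : ℝ) * (2 * Real.pi) := by
      rw [hθ]; push_cast; ring
    have hcos : Real.cos θ = -(1 / 2) := by
      rw [hθ', Real.cos_add_nat_mul_two_pi, Real.cos_pi_sub, Real.cos_pi_div_three]
    have hφ' : φ = Real.pi / 3 + (m : ℝ) * (2 * Real.pi) := by rw [hφ]; push_cast; ring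
    have hsin : Real.sin φ = Real.sqrt 3 / 2 := by
      rw [hφ', Real.sin_add_nat_mul_two_pi, Real.sin_pi_div_three]
    constructor
    · rw [hval, hcos]; push_cast; ring
    · rw [hder, hsin]
      have h0 : Real.sqrt 3 / 2 ≠ 0 := by positivity
      exact mul_ne_zero (mul_ne_zero (mul_ne_zero (by norm_num) Complex.I_ne_zero) hkc)
        (Complex.ofReal_ne_zero.mpr h0)
  · intro h3
    obtain ⟨m, rfl⟩ : ∃ m, k = 3 * m + 2 := ⟨k / 3, by omega⟩
    have hθ'' : θ = -(Real.pi - Real.pi / 3) + ((m + 1 : ℕ) : ℝ) * (2 * Real.pi) := by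
      rw [hθ]; push_cast; ring
    have hcos : Real.cos θ = -(1 / 2) := by
      rw [hθ'', Real.cos_add_nat_mul_two_pi, Real.cos_neg, Real.cos_pi_sub,
        Real.cos_pi_div_three]
    have hφ' : φ = ((2 * m + 1 : ℕ) : ℝ) * Real.pi := by rw [hφ]; push_cast; ring
    have hsin : Real.sin φ = 0 := by rw [hφ', Real.sin_nat_mul_pi]
    constructor
    · rw [hval, hcos]; push_cast; ring
    · rw [hder, hsin]; simp
end
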